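/- arXiv:1111.4244 — 6 statements merged into one kernel-verified Lean document; each statement's English description precedes it below -/
import Mathlib

section
/- Let V be a finite index set and for each i ∈ V let M_i be a matrix (over ℂ) with a fixed number of columns, viewed as assigning to each cut Ω ⊆ V the block matrix Λ_Ω formed from the submatrix of a fixed global matrix H with rows indexed by V \ Ω and columns indexed by Ω. Then the function D(Ω) = rank(Λ_Ω) is submodular in Ω: for all A, B ⊆ V, rank(Λ_A) + rank(Λ_B) ≥ rank(Λ_{A∪B}) + rank(Λ_{A∩B}). -/
open Submodule FiniteDimensional Module

section aux

variable {V : Type*} [Fintype V] [DecidableEq V]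

/-- Restriction (coordinate projection) to a subset. -/
noncomputable def resMap (S : Finset V) : (V → ℂ) →ₗ[ℂ] ({x // x ∈ S} → ℂ) :=
  LinearMap.funLeft ℂ ℂ (fun i => (i : V))

lemma mem_ker_resMap {S : Finset V} {x : V → ℂ} :
    x ∈ LinearMap.ker (resMap S) ↔ ∀ i ∈ S, x i = 0 := by
  constructor
  · intro h i hi
    have := congrFun (LinearMap.mem_ker.mp h) ⟨i, hi⟩
    simpa [resMap, LinearMap.funLeft_apply] using this
  · intro h
    ext j
    simpa [resMap, LinearMap.funLeft_apply] using h j j.2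

/-- Subspace of vectors supported on `S`. -/
noncomputable def suppSub (S : Finset V) : Submodule ℂ (V → ℂ) :=
  LinearMap.ker (resMap Sᶜ)

lemma mem_suppSub {S : Finset V} {x : V → ℂ} :
    x ∈ suppSub S ↔ ∀ i ∉ S, x i = 0 := by
  exact mem_ker_resMap.trans (by simp)

lemma suppSub_union (A B : Finset V) : suppSub (A ∪ B) = suppSub A ⊔ suppSub B := by
  apply le_antisymm
  · intro x hx
    rw [mem_suppSub] at hx
    set y : V → ℂ := fun i => if i ∈ A then x i else 0 with hy
    have hyA : y ∈ suppSub A := by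
      rw [mem_suppSub]; intro i hi; simp [hy, hi]
    have hzB : x - y ∈ suppSub B := by
      rw [mem_suppSub]; intro i hi
      by_cases hA : i ∈ A
      · simp [hy, hA]
      · have : x i = 0 := hx i (by simp [hA, hi])
        simp [hy, hA, this]
    have : x = y + (x - y) := by ring_nf
    rw [this]
    exact add_mem_sup hyA hzB
  · refine sup_le ?_ ?_ <;> intro x hx <;> rw [mem_suppSub] at hx ⊢ <;> intro i hi <;>
      exact hx i (by intro h; exact hi (by simp [h]))

lemma suppSub_inter (A B : Finset V) : suppSub (A ∩ B) = suppSub A ⊓ suppSub B := by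
  ext x
  simp only [mem_inf, mem_suppSub, Finset.mem_inter]
  constructor
  · intro h
    constructor <;> intro i hi <;> exact h i (by tauto)
  · rintro ⟨h1, h2⟩ i hi
    by_cases hA : i ∈ A
    · exact h2 i (fun hB => hi ⟨hA, hB⟩)
    · exact h1 i hA

/-- Rank–nullity for the restriction of a map to a submodule. -/
lemma finrank_map_add_finrank_inf_ker {M N : Type*} [AddCommGroup M] [Module ℂ M]
    [AddCommGroup N] [Module ℂ N] (f : M →ₗ[ℂ] N) (p : Submodule ℂ M)
    [FiniteDimensional ℂ p] :
    finrank ℂ (p.map f) + finrank ℂ (p ⊓ LinearMap.ker f : Submodule ℂ M) = finrank ℂ p := by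
  have h := LinearMap.finrank_range_add_finrank_ker (f.domRestrict p)
  rw [LinearMap.range_domRestrict, LinearMap.ker_domRestrict] at h
  rw [← h]
  congr 1
  rw [← Submodule.finrank_map_subtype_eq p (comap p.subtype (LinearMap.ker f)),
    Submodule.map_comap_subtype]

end aux

/-- For a fixed matrix `H` indexed by a finite node set `V`, the function
`D(Ω) = rank(Λ_Ω)`, where `Λ_Ω` is the submatrix of `H` with rows indexed by `V \ Ω`
and columns indexed by `Ω`, is submodular. -/
theorem stmt_1 {V : Type*} [Fintype V] [DecidableEq V] (H : Matrix V V ℂ)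
    (D : Finset V → ℕ)
    (hD : ∀ Ω : Finset V,
      D Ω = (H.submatrix (fun i : {x // x ∈ Ωᶜ} => (i : V))
        (fun j : {x // x ∈ Ω} => (j : V))).rank) :
    ∀ A B : Finset V, D (A ∪ B) + D (A ∩ B) ≤ D A + D B := by
  -- Column span
  set U : Finset V → Submodule ℂ (V → ℂ) := fun Ω => Submodule.span ℂ (H.transpose '' (Ω : Set V))
    with hU
  -- D Ω is the rank of the projection of the column span onto coordinates Ωᶜ
  have hDmap : ∀ Ω : Finset V, D Ω = finrank ℂ ((U Ω).map (resMap Ωᶜ)) := by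
    intro Ω
    have hset : Set.range (H.submatrix (fun i : {x // x ∈ Ωᶜ} => (i : V))
        (fun j : {x // x ∈ Ω} => (j : V))).transpose
        = resMap Ωᶜ '' (H.transpose '' (Ω : Set V)) := by
      ext y
      constructor
      · rintro ⟨j, rfl⟩
        exact ⟨H.transpose (j : V), ⟨(j : V), j.2, rfl⟩, rfl⟩
      · rintro ⟨z, ⟨v, hv, rfl⟩, rfl⟩
        exact ⟨⟨v, hv⟩, rfl⟩
    rw [hD, Matrix.rank_eq_finrank_span_cols]; erw [hset]; rw [Submodule.span_image, hU]
  intro A B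
  -- abbreviations
  have hUAB : U (A ∪ B) = U A ⊔ U B := by
    rw [hU]; simp only [Finset.coe_union, Set.image_union, Submodule.span_union]
    erw [Set.image_union, Submodule.span_union]
  have hUint : U (A ∩ B) ≤ U A ⊓ U B := by
    rw [hU]
    exact le_inf (Submodule.span_mono (Set.image_mono (by simp [Finset.coe_inter])))
      (Submodule.span_mono (Set.image_mono (by simp [Finset.coe_inter])))
  -- rank-nullity identities; note ker (resMap Ωᶜ) = suppSub Ω
  have hker : ∀ Ω : Finset V, LinearMap.ker (resMap (V := V) Ωᶜ) = suppSub Ω := by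
    intro Ω; rw [suppSub]
  have key : ∀ (Ω : Finset V) (p : Submodule ℂ (V → ℂ)),
      finrank ℂ (p.map (resMap Ωᶜ)) + finrank ℂ (p ⊓ suppSub Ω : Submodule ℂ (V → ℂ))
        = finrank ℂ p := by
    intro Ω p
    rw [← hker Ω]
    exact finrank_map_add_finrank_inf_ker _ p
  -- main dimension counting
  set X := U A ⊓ suppSub A with hX
  set Y := U B ⊓ suppSub B with hY
  have hXY1 : X ⊔ Y ≤ (U A ⊔ U B) ⊓ suppSub (A ∪ B) := by
    rw [suppSub_union]
    exact sup_le (le_inf (le_trans inf_le_left le_sup_left) (le_trans inf_le_right le_sup_left))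
      (le_inf (le_trans inf_le_left le_sup_right) (le_trans inf_le_right le_sup_right))
  have hXY2 : X ⊓ Y ≤ (U A ⊓ U B) ⊓ suppSub (A ∩ B) := by
    rw [suppSub_inter]
    exact le_inf (le_inf (le_trans inf_le_left inf_le_left) (le_trans inf_le_right inf_le_left))
      (le_inf (le_trans inf_le_left inf_le_right) (le_trans inf_le_right inf_le_right))
  have hdimXY : finrank ℂ X + finrank ℂ Y
      ≤ finrank ℂ ((U A ⊔ U B) ⊓ suppSub (A ∪ B) : Submodule ℂ (V → ℂ))
        + finrank ℂ ((U A ⊓ U B) ⊓ suppSub (A ∩ B) : Submodule ℂ (V → ℂ)) := by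
    calc finrank ℂ X + finrank ℂ Y
        = finrank ℂ (X ⊔ Y : Submodule ℂ (V → ℂ)) + finrank ℂ (X ⊓ Y : Submodule ℂ (V → ℂ)) :=
          (Submodule.finrank_sup_add_finrank_inf_eq X Y).symm
      _ ≤ _ := add_le_add (Submodule.finrank_mono hXY1) (Submodule.finrank_mono hXY2)
  have hsupinf : finrank ℂ (U A ⊔ U B : Submodule ℂ (V → ℂ))
      + finrank ℂ (U A ⊓ U B : Submodule ℂ (V → ℂ)) = finrank ℂ (U A) + finrank ℂ (U B) :=
    Submodule.finrank_sup_add_finrank_inf_eq _ _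
  -- put everything together
  have e1 := key (A ∪ B) (U A ⊔ U B)
  have e2 := key (A ∩ B) (U A ⊓ U B)
  have e3 := key A (U A)
  have e4 := key B (U B)
  rw [← hX] at e3
  rw [← hY] at e4
  have hDA : D A = finrank ℂ ((U A).map (resMap Aᶜ)) := hDmap A
  have hDB : D B = finrank ℂ ((U B).map (resMap Bᶜ)) := hDmap B
  have hDAB : D (A ∪ B) = finrank ℂ ((U A ⊔ U B).map (resMap (A ∪ B)ᶜ)) := by
    rw [hDmap (A ∪ B), hUAB]
  have hDint : D (A ∩ B) ≤ finrank ℂ ((U A ⊓ U B).map (resMap (A ∩ B)ᶜ)) := by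
    rw [hDmap (A ∩ B)]
    exact Submodule.finrank_mono (Submodule.map_mono hUint)
  omega
end

section
/- Let X₁,…,Xₙ, Y₁,…,Yₙ be finitely-valued random variables such that X₁,…,Xₙ are mutually independent and, conditioned on (X₁,…,Xₙ), the variables Y₁,…,Yₙ are mutually independent. Then the function F(A) = I(X_A ; Y_{Aᶜ} | X_{Aᶜ}) on subsets A of {1,…,n} is submodular. -/
open Finset

/-- Probability that the random variable `Z` takes the value `z`. -/
noncomputable def prob' {Ω : Type*} [Fintype Ω] (μ : Ω → ℝ) {α : Type*} [DecidableEq α]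
    (Z : Ω → α) (z : α) : ℝ :=
  ∑ ω ∈ Finset.univ.filter (fun ω => Z ω = z), μ ω

/-- Shannon entropy (base 2) of a finitely-valued random variable. -/
noncomputable def ent' {Ω : Type*} [Fintype Ω] (μ : Ω → ℝ) {α : Type*} [Fintype α]
    [DecidableEq α] (Z : Ω → α) : ℝ :=
  -∑ z : α, prob' μ Z z * Real.logb 2 (prob' μ Z z)

/-- Conditional Shannon entropy `H(Z | W) = H(Z, W) − H(W)`. -/
noncomputable def condEnt' {Ω : Type*} [Fintype Ω] (μ : Ω → ℝ) {α β : Type*}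
    [Fintype α] [DecidableEq α] [Fintype β] [DecidableEq β]
    (Z : Ω → α) (W : Ω → β) : ℝ :=
  ent' μ (fun ω => (Z ω, W ω)) - ent' μ W

/-- Conditional mutual information `I(X ; Y | Z) = H(X|Z) + H(Y|Z) − H(X,Y|Z)`. -/
noncomputable def condMI' {Ω : Type*} [Fintype Ω] (μ : Ω → ℝ) {α β γ : Type*}
    [Fintype α] [DecidableEq α] [Fintype β] [DecidableEq β] [Fintype γ] [DecidableEq γ]
    (X : Ω → α) (Y : Ω → β) (Z : Ω → γ) : ℝ :=
  condEnt' μ X Z + condEnt' μ Y Z - condEnt' μ (fun ω => (X ω, Y ω)) Z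

section base
variable {Ω : Type*} [Fintype Ω] (μ : Ω → ℝ)

lemma prob'_nonneg (hμ0 : ∀ ω, 0 ≤ μ ω) {α : Type*} [DecidableEq α] (Z : Ω → α) (z : α) :
    0 ≤ prob' μ Z z :=
  Finset.sum_nonneg fun ω _ => hμ0 ω

lemma prob'_congr {α β : Type*} [DecidableEq α] [DecidableEq β] {Z : Ω → α} {Z' : Ω → β}
    {z : α} {z' : β} (h : ∀ ω, Z ω = z ↔ Z' ω = z') : prob' μ Z z = prob' μ Z' z' := by
  unfold prob'
  congr 1
  exact Finset.filter_congr fun ω _ => by simpa using h ω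

lemma prob'_mono (hμ0 : ∀ ω, 0 ≤ μ ω) {α β : Type*} [DecidableEq α] [DecidableEq β]
    {Z : Ω → α} {Z' : Ω → β} {z : α} {z' : β} (h : ∀ ω, Z ω = z → Z' ω = z') :
    prob' μ Z z ≤ prob' μ Z' z' := by
  apply Finset.sum_le_sum_of_subset_of_nonneg
  · intro ω hω
    simp only [Finset.mem_filter, Finset.mem_univ, true_and] at *
    exact h ω hω
  · exact fun ω _ _ => hμ0 ω

lemma prob'_comp {α β : Type*} [DecidableEq α] [DecidableEq β] [Fintype α]
    (Z : Ω → α) (f : α → β) (y : β) :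
    prob' μ (fun ω => f (Z ω)) y = ∑ z ∈ Finset.univ.filter (fun z => f z = y), prob' μ Z z := by
  unfold prob'
  calc ∑ ω ∈ Finset.univ.filter (fun ω => f (Z ω) = y), μ ω
      = ∑ ω : Ω, if f (Z ω) = y then μ ω else 0 := Finset.sum_filter _ _
    _ = ∑ z : α, ∑ ω ∈ Finset.univ.filter (fun ω => Z ω = z), if f (Z ω) = y then μ ω else 0 :=
        (Finset.sum_fiberwise (Finset.univ : Finset Ω) Z
          (fun ω => if f (Z ω) = y then μ ω else 0)).symm
    _ = ∑ z : α, if f z = y then ∑ ω ∈ Finset.univ.filter (fun ω => Z ω = z), μ ω else 0 := by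
        refine Finset.sum_congr rfl fun z _ => ?_
        rw [show (∑ ω ∈ Finset.univ.filter (fun ω => Z ω = z), if f (Z ω) = y then μ ω else 0)
            = ∑ ω ∈ Finset.univ.filter (fun ω => Z ω = z), if f z = y then μ ω else 0 from
          Finset.sum_congr rfl fun ω hω => by rw [(Finset.mem_filter.1 hω).2]]
        by_cases h : f z = y <;> simp [h]
    _ = _ := (Finset.sum_filter _ _).symm

lemma prob'_total {α : Type*} [DecidableEq α] [Fintype α] (Z : Ω → α) :
    ∑ z : α, prob' μ Z z = ∑ ω, μ ω := by
  unfold prob'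
  exact Finset.sum_fiberwise _ _ _

/-- workhorse: sums of marginal-prob-weighted functions -/
lemma sum_prob'_comp_mul {α β : Type*} [DecidableEq α] [DecidableEq β] [Fintype α] [Fintype β]
    (Z : Ω → α) (f : α → β) (L : β → ℝ) :
    ∑ y : β, prob' μ (fun ω => f (Z ω)) y * L y = ∑ z : α, prob' μ Z z * L (f z) := by
  simp_rw [prob'_comp μ Z f, Finset.sum_mul]
  rw [← Finset.sum_fiberwise (Finset.univ : Finset α) f (fun z => prob' μ Z z * L (f z))]
  refine Finset.sum_congr rfl fun y _ => Finset.sum_congr rfl fun z hz => ?_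
  rw [(Finset.mem_filter.1 hz).2]

lemma ent'_comp_inj {α β : Type*} [Fintype α] [DecidableEq α] [Fintype β] [DecidableEq β]
    (Z : Ω → α) (f : α → β) (hf : Function.Injective f) :
    ent' μ (fun ω => f (Z ω)) = ent' μ Z := by
  unfold ent'
  congr 1
  have h1 : ∀ z : α, prob' μ (fun ω => f (Z ω)) (f z) = prob' μ Z z := fun z =>
    prob'_congr μ fun ω => by simp [hf.eq_iff]
  calc ∑ y : β, prob' μ (fun ω => f (Z ω)) y * Real.logb 2 (prob' μ (fun ω => f (Z ω)) y)
      = ∑ y ∈ Finset.univ.image f, prob' μ (fun ω => f (Z ω)) y *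
          Real.logb 2 (prob' μ (fun ω => f (Z ω)) y) := by
        symm
        apply Finset.sum_subset (Finset.subset_univ _)
        intro y _ hy
        have : prob' μ (fun ω => f (Z ω)) y = 0 := by
          unfold prob'
          apply Finset.sum_eq_zero
          intro ω hω
          exfalso
          apply hy
          simp only [Finset.mem_filter, Finset.mem_univ, true_and] at hω
          exact Finset.mem_image.2 ⟨Z ω, Finset.mem_univ _, hω⟩
        simp [this]
    _ = ∑ z : α, prob' μ (fun ω => f (Z ω)) (f z) *
          Real.logb 2 (prob' μ (fun ω => f (Z ω)) (f z)) :=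
        Finset.sum_image (fun a _ b _ h => hf h)
    _ = ∑ z : α, prob' μ Z z * Real.logb 2 (prob' μ Z z) := by simp [h1]
  
lemma ent'_congr {α β : Type*} [Fintype α] [DecidableEq α] [Fintype β] [DecidableEq β]
    {Z Z' : Ω → α} (h : ∀ ω, Z ω = Z' ω) : ent' μ Z = ent' μ Z' := by
  congr 1; exact funext h

end base

section indep
variable {ι : Type*} [Fintype ι] [DecidableEq ι] {κ : Type*} [Fintype κ] [DecidableEq κ]

lemma sum_filter_prod' (S : Finset ι) (g : {i // i ∈ S} → κ) (p : ι → κ → ℝ) :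
    ∑ y ∈ Finset.univ.filter (fun y : ι → κ => (fun j : {i // i ∈ S} => y j) = g),
        ∏ i, p i (y i)
      = (∏ j : {i // i ∈ S}, p (j : ι) (g j)) * ∏ i ∈ Sᶜ, (∑ t, p i t) := by
  classical
  set t : ι → Finset κ := fun i => if h : i ∈ S then {g ⟨i, h⟩} else Finset.univ with ht
  have hfilter : Finset.univ.filter (fun y : ι → κ => (fun j : {i // i ∈ S} => y j) = g)
      = Fintype.piFinset t := by
    ext y
    simp only [Finset.mem_filter, Finset.mem_univ, true_and, Fintype.mem_piFinset, funext_iff]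
    constructor
    · intro h i
      by_cases hi : i ∈ S
      · simp only [ht, dif_pos hi, Finset.mem_singleton]
        exact h ⟨i, hi⟩
      · simp [ht, dif_neg hi]
    · intro h j
      have := h j.1
      simp only [ht, dif_pos j.2, Finset.mem_singleton, Subtype.coe_eta] at this
      exact this
  rw [hfilter, ← Finset.prod_univ_sum t p, ← Finset.prod_mul_prod_compl S
    (fun i => ∑ b ∈ t i, p i b)]
  congr 1
  · rw [← Finset.prod_attach S (fun i => ∑ b ∈ t i, p i b), Finset.univ_eq_attach]
    refine Finset.prod_congr rfl fun j _ => ?_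
    simp only [ht, j.2, dif_pos, Subtype.coe_eta, Finset.sum_singleton]
  · refine Finset.prod_congr rfl fun i hi => ?_
    rw [Finset.mem_compl] at hi
    simp only [ht, hi, dif_neg, not_false_iff]

end indep
section prodent
variable {Ω : Type*} [Fintype Ω] (μ : Ω → ℝ)

/-- Entropy of a random tuple whose distribution is a product is the sum of entropies. -/
lemma ent'_of_prod {ι : Type*} [Fintype ι] [DecidableEq ι] {κ : Type*} [Fintype κ]
    [DecidableEq κ] (W : Ω → (ι → κ)) (p : ι → κ → ℝ)
    (hp : ∀ g, prob' μ W g = ∏ i, p i (g i)) (hp1 : ∀ i, ∑ t, p i t = 1) :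
    ent' μ W = ∑ i, (-∑ t, p i t * Real.logb 2 (p i t)) := by
  classical
  have key : ∑ z : ι → κ, prob' μ W z * Real.logb 2 (prob' μ W z)
      = ∑ j : ι, ∑ t : κ, p j t * Real.logb 2 (p j t) := by
    have step1 : ∑ z : ι → κ, prob' μ W z * Real.logb 2 (prob' μ W z)
        = ∑ z : ι → κ, ∑ j : ι, (∏ i, p i (z i)) * Real.logb 2 (p j (z j)) := by
      refine Finset.sum_congr rfl fun z _ => ?_
      rw [hp z]
      by_cases h0 : (∏ i, p i (z i)) = 0
      · rw [h0]
        rw [Finset.sum_eq_zero]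
        · ring
        · intro j _; rw [zero_mul]
      · rw [← Finset.mul_sum]
        congr 1
        exact Real.logb_prod _ _ fun i _ =>
          fun h => h0 (by rw [Finset.prod_eq_zero (Finset.mem_univ i) h])
    rw [step1, Finset.sum_comm]
    refine Finset.sum_congr rfl fun j _ => ?_
    set F : ι → κ → ℝ := fun i s => if i = j then p i s * Real.logb 2 (p j s) else p i s with hF
    have hpoint : ∀ z : ι → κ, (∏ i, p i (z i)) * Real.logb 2 (p j (z j))
        = ∏ i, F i (z i) := by
      intro z
      rw [← Finset.prod_erase_mul Finset.univ _ (Finset.mem_univ j),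
          ← Finset.prod_erase_mul Finset.univ _ (Finset.mem_univ j)]
      have h1 : ∀ i ∈ Finset.univ.erase j, F i (z i) = p i (z i) := by
        intro i hi
        rw [hF]
        simp [Finset.mem_erase.1 hi |>.1]
      rw [Finset.prod_congr rfl h1]
      have h2 : F j (z j) = p j (z j) * Real.logb 2 (p j (z j)) := by rw [hF]; simp
      rw [h2]
      ring
    simp_rw [hpoint]
    calc ∑ z : ι → κ, ∏ i, F i (z i)
        = ∑ z ∈ Fintype.piFinset (fun _ : ι => (Finset.univ : Finset κ)), ∏ i, F i (z i) := by
          rw [Fintype.piFinset_univ]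
      _ = ∏ i, ∑ t, F i t := (Finset.prod_univ_sum _ _).symm
      _ = ∑ t, F j t := by
          refine Finset.prod_eq_single j (fun i _ hij => ?_) (by simp)
          rw [hF]
          simp only [hij, if_false]
          exact hp1 i
      _ = ∑ t, p j t * Real.logb 2 (p j t) := by rw [hF]; simp
  unfold ent'
  rw [key]
  exact (Finset.sum_neg_distrib _).symm

end prodent

section gibbs
variable {Ω : Type*} [Fintype Ω] (μ : Ω → ℝ)

/-- expression of an entropy of a function of `Z` as a `Z`-sum -/
lemma ent'_comp_eq_sum {α β : Type*} [Fintype α] [DecidableEq α] [Fintype β] [DecidableEq β]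
    (Z : Ω → α) (f : α → β) :
    ent' μ (fun ω => f (Z ω)) =
      -∑ z : α, prob' μ Z z * Real.logb 2 (prob' μ (fun ω => f (Z ω)) (f z)) := by
  unfold ent'
  rw [sum_prob'_comp_mul μ Z f (fun y => Real.logb 2 (prob' μ (fun ω => f (Z ω)) y))]

theorem condMI'_nonneg {α β γ : Type*} [Fintype α] [DecidableEq α] [Fintype β] [DecidableEq β]
    [Fintype γ] [DecidableEq γ] (hμ0 : ∀ ω, 0 ≤ μ ω) (hμ1 : ∑ ω, μ ω = 1)
    (U : Ω → α) (V : Ω → β) (W : Ω → γ) : 0 ≤ condMI' μ U V W := by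
  classical
  set T : Ω → α × β × γ := fun ω => (U ω, V ω, W ω) with hT
  set q : α × β × γ → ℝ := prob' μ T with hq
  set a : α × γ → ℝ := prob' μ (fun ω => (U ω, W ω)) with haf
  set b : β × γ → ℝ := prob' μ (fun ω => (V ω, W ω)) with hbf
  set c : γ → ℝ := prob' μ W with hcf
  have hq0 : ∀ z, 0 ≤ q z := fun z => prob'_nonneg μ hμ0 _ _
  have ha0 : ∀ p, 0 ≤ a p := fun p => prob'_nonneg μ hμ0 _ _
  have hb0 : ∀ p, 0 ≤ b p := fun p => prob'_nonneg μ hμ0 _ _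
  have hc0 : ∀ w, 0 ≤ c w := fun w => prob'_nonneg μ hμ0 _ _
  have hqa : ∀ z, q z ≤ a (z.1, z.2.2) := by
    intro z
    exact prob'_mono μ hμ0 (fun ω h => by rw [← h])
  have hqb : ∀ z, q z ≤ b (z.2.1, z.2.2) := by
    intro z
    exact prob'_mono μ hμ0 (fun ω h => by rw [← h])
  have hqc : ∀ z, q z ≤ c z.2.2 := by
    intro z
    exact prob'_mono μ hμ0 (fun ω h => by rw [← h])
  have hq1 : ∑ z, q z = 1 := by rw [hq, prob'_total μ T, hμ1]
  have hc1 : ∑ w, c w = 1 := by rw [hcf, prob'_total μ W, hμ1]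
  -- marginal sums
  have hac : ∀ w, ∑ u, a (u, w) = c w := by
    intro w
    have : c w = prob' μ (fun ω => (fun p : α × γ => p.2) ((fun ω => (U ω, W ω)) ω)) w := rfl
    rw [this, prob'_comp μ (fun ω => (U ω, W ω)) (fun p : α × γ => p.2) w, Finset.sum_filter,
      Fintype.sum_prod_type]
    simp
    rfl
  have hbc : ∀ w, ∑ v, b (v, w) = c w := by
    intro w
    have : c w = prob' μ (fun ω => (fun p : β × γ => p.2) ((fun ω => (V ω, W ω)) ω)) w := rfl
    rw [this, prob'_comp μ (fun ω => (V ω, W ω)) (fun p : β × γ => p.2) w, Finset.sum_filter,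
      Fintype.sum_prod_type]
    simp
    rfl
  -- entropy representations
  have eUW : ent' μ (fun ω => (U ω, W ω)) = -∑ z, q z * Real.logb 2 (a (z.1, z.2.2)) := by
    have h1 : (fun ω => (U ω, W ω)) = fun ω => ((T ω).1, (T ω).2.2) := rfl
    rw [h1, ent'_comp_eq_sum μ T (fun z => (z.1, z.2.2))]
  have eVW : ent' μ (fun ω => (V ω, W ω)) = -∑ z, q z * Real.logb 2 (b (z.2.1, z.2.2)) := by
    have h1 : (fun ω => (V ω, W ω)) = fun ω => ((T ω).2.1, (T ω).2.2) := rfl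
    rw [h1, ent'_comp_eq_sum μ T (fun z => (z.2.1, z.2.2))]
  have eW : ent' μ W = -∑ z, q z * Real.logb 2 (c z.2.2) := by
    have h1 : W = fun ω => (T ω).2.2 := rfl
    conv_lhs => rw [h1]
    rw [ent'_comp_eq_sum μ T (fun z => z.2.2)]
  have eUVW : ent' μ (fun ω => ((U ω, V ω), W ω)) = -∑ z, q z * Real.logb 2 (q z) := by
    have h1 : (fun ω => ((U ω, V ω), W ω)) = fun ω => (((T ω).1, (T ω).2.1), (T ω).2.2) := rfl
    rw [h1, ent'_comp_eq_sum μ T (fun z => ((z.1, z.2.1), z.2.2))]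
    congr 1
    refine Finset.sum_congr rfl fun z _ => ?_
    congr 1
    congr 1
    exact prob'_congr μ fun ω => by
      simp only [Prod.ext_iff]
      tauto
  -- the quantity as a single sum
  set L : α × β × γ → ℝ := fun z => Real.logb 2 (a (z.1, z.2.2)) + Real.logb 2 (b (z.2.1, z.2.2))
      - Real.logb 2 (q z) - Real.logb 2 (c z.2.2) with hL
  have hrepr : condMI' μ U V W = -∑ z, q z * L z := by
    have hsum : ∑ z, q z * L z =
        (∑ z, q z * Real.logb 2 (a (z.1, z.2.2))) + (∑ z, q z * Real.logb 2 (b (z.2.1, z.2.2)))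
        - (∑ z, q z * Real.logb 2 (q z)) - (∑ z, q z * Real.logb 2 (c z.2.2)) := by
      rw [← Finset.sum_add_distrib, ← Finset.sum_sub_distrib, ← Finset.sum_sub_distrib]
      refine Finset.sum_congr rfl fun z _ => ?_
      rw [hL]; ring
    unfold condMI' condEnt'
    rw [eUW, eVW, eW, eUVW]
    rw [hsum]; ring
  rw [hrepr]
  have key : ∑ z, q z * L z ≤ 0 := by
    have hlog2 : (0:ℝ) < Real.log 2 := Real.log_pos (by norm_num)
    set E : α × β × γ → ℝ := fun z =>
      if 0 < q z then a (z.1, z.2.2) * b (z.2.1, z.2.2) / c z.2.2 else 0 with hE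
    have pointwise : ∀ z, q z * L z ≤ (E z - q z) / Real.log 2 := by
      intro z
      by_cases hz : 0 < q z
      · have haz : 0 < a (z.1, z.2.2) := lt_of_lt_of_le hz (hqa z)
        have hbz : 0 < b (z.2.1, z.2.2) := lt_of_lt_of_le hz (hqb z)
        have hcz : 0 < c z.2.2 := lt_of_lt_of_le hz (hqc z)
        have hLz : L z = Real.log (a (z.1, z.2.2) * b (z.2.1, z.2.2) / (q z * c z.2.2))
            / Real.log 2 := by
          rw [hL]
          simp only [Real.logb]
          rw [Real.log_div (by positivity) (by positivity), Real.log_mul (ne_of_gt haz)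
            (ne_of_gt hbz), Real.log_mul (ne_of_gt hz) (ne_of_gt hcz)]
          ring
        have hratio : (0:ℝ) < a (z.1, z.2.2) * b (z.2.1, z.2.2) / (q z * c z.2.2) := by positivity
        have hlogle := Real.log_le_sub_one_of_pos hratio
        have hEz : E z = a (z.1, z.2.2) * b (z.2.1, z.2.2) / c z.2.2 := by rw [hE]; simp [hz]
        have h2 : q z * L z = (q z * Real.log (a (z.1, z.2.2) * b (z.2.1, z.2.2)
            / (q z * c z.2.2))) / Real.log 2 := by rw [hLz]; ring
        have h3 : q z * Real.log (a (z.1, z.2.2) * b (z.2.1, z.2.2) / (q z * c z.2.2))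
            ≤ q z * (a (z.1, z.2.2) * b (z.2.1, z.2.2) / (q z * c z.2.2) - 1) :=
          mul_le_mul_of_nonneg_left hlogle (le_of_lt hz)
        have h4 : q z * (a (z.1, z.2.2) * b (z.2.1, z.2.2) / (q z * c z.2.2) - 1)
            = E z - q z := by
          rw [hEz]
          field_simp
        rw [h2]
        exact (div_le_div_iff_of_pos_right hlog2).mpr (by linarith)
      · have hz0 : q z = 0 := le_antisymm (not_lt.1 hz) (hq0 z)
        have hEz : E z = 0 := by rw [hE]; simp [hz]
        rw [hz0, hEz]; simp
    calc ∑ z, q z * L z ≤ ∑ z, (E z - q z) / Real.log 2 :=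
          Finset.sum_le_sum fun z _ => pointwise z
      _ = ((∑ z, E z) - 1) / Real.log 2 := by
          rw [← Finset.sum_div, Finset.sum_sub_distrib, hq1]
      _ ≤ 0 := by
        apply div_nonpos_of_nonpos_of_nonneg _ (le_of_lt hlog2)
        have hE1 : ∑ z, E z ≤ 1 := by
          set E' : α × β × γ → ℝ := fun z =>
            if 0 < c z.2.2 then a (z.1, z.2.2) * b (z.2.1, z.2.2) / c z.2.2 else 0 with hE'
          have h1 : ∀ z, E z ≤ E' z := by
            intro z
            by_cases hz : 0 < q z
            · have hcz : 0 < c z.2.2 := lt_of_lt_of_le hz (hqc z)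
              rw [hE, hE']; simp [hz, hcz]
            · rw [hE, hE']
              simp only [hz, if_false]
              by_cases hcz : 0 < c z.2.2
              · simp only [hcz, if_true]
                exact div_nonneg (mul_nonneg (ha0 _) (hb0 _)) (le_of_lt hcz)
              · simp [hcz]
          have h2 : ∑ z, E' z ≤ 1 := by
            have h3 : ∑ z, E' z = ∑ w, (if 0 < c w then c w else 0) := by
              rw [Fintype.sum_prod_type]
              simp_rw [Fintype.sum_prod_type]
              calc ∑ u : α, ∑ v : β, ∑ w : γ, E' (u, v, w)
                  = ∑ u : α, ∑ w : γ, ∑ v : β, E' (u, v, w) :=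
                    Finset.sum_congr rfl fun u _ => Finset.sum_comm
                _ = ∑ w : γ, ∑ u : α, ∑ v : β, E' (u, v, w) := Finset.sum_comm
                _ = ∑ w, (if 0 < c w then c w else 0) := by
                    refine Finset.sum_congr rfl fun w _ => ?_
                    by_cases hcw : 0 < c w
                    · simp only [hE', hcw, if_true]
                      have hstep : ∀ u, ∑ v, a (u, w) * b (v, w) / c w
                          = a (u, w) * (∑ v, b (v, w)) / c w := fun u => by
                        rw [Finset.mul_sum, Finset.sum_div]
                      simp_rw [hstep, hbc, mul_div_assoc, div_self (ne_of_gt hcw), mul_one, hac]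
                    · simp [hE', hcw]
            rw [h3, ← hc1]
            apply Finset.sum_le_sum
            intro w _
            by_cases hcw : 0 < c w <;> simp [hcw, hc0 w]
          calc ∑ z, E z ≤ ∑ z, E' z := Finset.sum_le_sum fun z _ => h1 z
            _ ≤ 1 := h2
        linarith
  linarith
end gibbs

section ci
variable {Ω α β : Type*} [Fintype Ω] [Fintype α] [DecidableEq α]
    [Fintype β] [DecidableEq β] {n : ℕ}
    (μ : Ω → ℝ) (hμ0 : ∀ ω, 0 ≤ μ ω) (hμ1 : ∑ ω, μ ω = 1)
    (X : Fin n → Ω → α) (Y : Fin n → Ω → β)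

include hμ0 hμ1 in
lemma entXY_subset
    (hY : ∀ (x : Fin n → α) (y : Fin n → β),
      prob' μ (fun ω => ((fun i => X i ω), (fun j => Y j ω))) (x, y) *
          (prob' μ (fun ω i => X i ω) x) ^ (n - 1)
        = ∏ j, prob' μ (fun ω => (Y j ω, fun i => X i ω)) (y j, x))
    (S : Finset (Fin n)) :
    ent' μ (fun ω => ((fun i => X i ω), (fun j : {j // j ∈ S} => Y j ω)))
      = (∑ j ∈ S, ent' μ (fun ω => (Y j ω, fun i => X i ω)))
        + ent' μ (fun ω (i : Fin n) => X i ω)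
        - (S.card : ℝ) * ent' μ (fun ω (i : Fin n) => X i ω) := by
  classical
  set Xp : Ω → Fin n → α := fun ω i => X i ω with hXpdef
  set XY : Ω → (Fin n → α) × ({j // j ∈ S} → β) :=
    fun ω => (Xp ω, fun j : {j // j ∈ S} => Y j ω) with hXYdef
  set pxy : (Fin n → α) × ({j // j ∈ S} → β) → ℝ := prob' μ XY with hpxydef
  set px : (Fin n → α) → ℝ := prob' μ Xp with hpxdef
  set pjx : Fin n → β × (Fin n → α) → ℝ :=
    fun j => prob' μ (fun ω => (Y j ω, Xp ω)) with hpjxdef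
  -- marginal: ∑ t, pjx j (t, x) = px x
  have f1 : ∀ (j : Fin n) (x : Fin n → α), ∑ t, pjx j (t, x) = px x := by
    intro j x
    have h0 : px x = prob' μ (fun ω =>
        (fun p : β × (Fin n → α) => p.2) ((fun ω => (Y j ω, Xp ω)) ω)) x := rfl
    rw [h0, prob'_comp μ (fun ω => (Y j ω, Xp ω)) (fun p : β × (Fin n → α) => p.2) x,
      Finset.sum_filter, Fintype.sum_prod_type]
    simp [hpjxdef]
  -- marginalization of the joint over coordinates outside S
  have f2 : ∀ (x : Fin n → α) (g : {j // j ∈ S} → β),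
      pxy (x, g) = ∑ y ∈ Finset.univ.filter
          (fun y : Fin n → β => (fun j : {j // j ∈ S} => y j) = g),
        prob' μ (fun ω => (Xp ω, fun j : Fin n => Y j ω)) (x, y) := by
    intro x g
    have h0 : pxy (x, g) = prob' μ (fun ω =>
        (fun p : (Fin n → α) × (Fin n → β) => (p.1, fun j : {j // j ∈ S} => p.2 j))
          ((fun ω => (Xp ω, fun j : Fin n => Y j ω)) ω)) (x, g) := rfl
    rw [h0, prob'_comp μ (fun ω => (Xp ω, fun j : Fin n => Y j ω))
      (fun p : (Fin n → α) × (Fin n → β) => (p.1, fun j : {j // j ∈ S} => p.2 j)) (x, g),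
      Finset.sum_filter, Fintype.sum_prod_type]
    rw [show (∑ x' : Fin n → α, ∑ y : Fin n → β,
        if ((x', fun j : {j // j ∈ S} => y j) : (Fin n → α) × ({j // j ∈ S} → β)) = (x, g)
        then prob' μ (fun ω => (Xp ω, fun j : Fin n => Y j ω)) (x', y) else 0)
        = ∑ x' : Fin n → α, if x' = x then (∑ y : Fin n → β,
            if (fun j : {j // j ∈ S} => y j) = g
            then prob' μ (fun ω => (Xp ω, fun j : Fin n => Y j ω)) (x', y) else 0) else 0 from ?_]
    · rw [Finset.sum_ite_eq' Finset.univ x, if_pos (Finset.mem_univ x), Finset.sum_filter]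
    · refine Finset.sum_congr rfl fun x' _ => ?_
      by_cases hx : x' = x
      · simp only [hx, if_true]
        refine Finset.sum_congr rfl fun y _ => ?_
        by_cases hy : (fun j : {j // j ∈ S} => y j) = g
        · simp [hy]
        · simp [hy, Prod.ext_iff]
      · simp only [hx, if_false]
        rw [Finset.sum_eq_zero]
        intro y _
        rw [if_neg]
        simp [Prod.ext_iff, hx]
  -- product formula with n-1 padding
  have f3 : ∀ (x : Fin n → α) (g : {j // j ∈ S} → β),
      pxy (x, g) * px x ^ (n - 1)
        = (∏ j : {j // j ∈ S}, pjx (j : Fin n) (g j, x)) * px x ^ (n - S.card) := by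
    intro x g
    rw [f2, Finset.sum_mul]
    rw [Finset.sum_congr rfl (fun y _ => hY x y)]
    rw [sum_filter_prod' S g (fun j t => pjx j (t, x))]
    congr 1
    rw [Finset.prod_congr rfl (fun j (_ : j ∈ Sᶜ) => f1 j x), Finset.prod_const]
    congr 1
    rw [Finset.card_compl, Fintype.card_fin]
  -- dominations
  have hdom1 : ∀ z : (Fin n → α) × ({j // j ∈ S} → β), pxy z ≤ px z.1 := by
    intro z
    exact prob'_mono μ hμ0 fun ω h => by rw [← h]
  have hdom2 : ∀ (z : (Fin n → α) × ({j // j ∈ S} → β)) (j : {j // j ∈ S}),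
      pxy z ≤ pjx (j : Fin n) (z.2 j, z.1) := by
    intro z j
    refine prob'_mono μ hμ0 fun ω h => ?_
    rw [← h]
  -- padded identity
  have f5 : ∀ (x : Fin n → α) (g : {j // j ∈ S} → β),
      pxy (x, g) * px x ^ S.card = (∏ j : {j // j ∈ S}, pjx (j : Fin n) (g j, x)) * px x := by
    intro x g
    by_cases hS : S = ∅
    · subst hS
      haveI : IsEmpty {j // j ∈ (∅ : Finset (Fin n))} :=
        ⟨fun j => absurd j.2 (Finset.notMem_empty _)⟩
      simp only [Finset.card_empty, pow_zero, mul_one, Finset.univ_eq_empty,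
        Finset.prod_empty, one_mul]
      refine prob'_congr μ fun ω => ?_
      constructor
      · intro h; exact congrArg Prod.fst h
      · intro h
        rw [hXYdef]
        refine Prod.ext h (funext fun j => absurd j.2 (Finset.notMem_empty _))
    · have hcard1 : 1 ≤ S.card := Finset.card_pos.mpr (Finset.nonempty_iff_ne_empty.mpr hS)
      have hcardn : S.card ≤ n := by
        simpa using Finset.card_le_univ S
      by_cases hpx : px x = 0
      · have h0 : pxy (x, g) = 0 :=
          le_antisymm (by simpa [hpx] using hdom1 (x, g)) (prob'_nonneg μ hμ0 _ _)
        rw [h0, hpx]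
        simp
      · have hpow : px x ^ (n - 1) = px x ^ (n - S.card) * px x ^ (S.card - 1) := by
          rw [← pow_add]
          congr 1
          omega
        have E := f3 x g
        rw [hpow] at E
        have E' : (pxy (x, g) * px x ^ (S.card - 1)) * px x ^ (n - S.card)
            = (∏ j : {j // j ∈ S}, pjx (j : Fin n) (g j, x)) * px x ^ (n - S.card) := by
          rw [← E]; ring
        have hc := mul_right_cancel₀ (pow_ne_zero _ hpx) E'
        calc pxy (x, g) * px x ^ S.card
            = (pxy (x, g) * px x ^ (S.card - 1)) * px x := by
              rw [mul_assoc, ← pow_succ]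
              congr 2
              omega
          _ = _ := by rw [hc]
  -- entropy computation
  have hpxy0 : ∀ z, 0 ≤ pxy z := fun z => prob'_nonneg μ hμ0 _ _
  have key : ∑ z : (Fin n → α) × ({j // j ∈ S} → β), pxy z * Real.logb 2 (pxy z)
      = (∑ j : {j // j ∈ S}, ∑ d : β × (Fin n → α),
          pjx (j : Fin n) d * Real.logb 2 (pjx (j : Fin n) d))
        + (∑ x, px x * Real.logb 2 (px x))
        - (S.card : ℝ) * (∑ x, px x * Real.logb 2 (px x)) := by
    have pointwise : ∀ z : (Fin n → α) × ({j // j ∈ S} → β),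
        pxy z * Real.logb 2 (pxy z)
          = (∑ j : {j // j ∈ S}, pxy z * Real.logb 2 (pjx (j : Fin n) (z.2 j, z.1)))
            + pxy z * Real.logb 2 (px z.1)
            - (S.card : ℝ) * (pxy z * Real.logb 2 (px z.1)) := by
      intro z
      by_cases h0 : pxy z = 0
      · simp [h0]
      · have hpxyz : 0 < pxy z := lt_of_le_of_ne (hpxy0 z) (Ne.symm h0)
        have hpxz : 0 < px z.1 := lt_of_lt_of_le hpxyz (hdom1 z)
        have hpjxz : ∀ j : {j // j ∈ S}, 0 < pjx (j : Fin n) (z.2 j, z.1) :=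
          fun j => lt_of_lt_of_le hpxyz (hdom2 z j)
        have hid := f5 z.1 z.2
        have hlog := congrArg (Real.logb 2) hid
        rw [Real.logb_mul (by simpa using h0) (pow_ne_zero _ (ne_of_gt hpxz)),
          Real.logb_pow, Real.logb_mul (Finset.prod_ne_zero_iff.mpr
            (fun j _ => ne_of_gt (hpjxz j))) (ne_of_gt hpxz),
          Real.logb_prod _ _ (fun j _ => ne_of_gt (hpjxz j))] at hlog
        have hsolve : Real.logb 2 (pxy z)
            = (∑ j : {j // j ∈ S}, Real.logb 2 (pjx (j : Fin n) (z.2 j, z.1)))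
              + Real.logb 2 (px z.1) - (S.card : ℝ) * Real.logb 2 (px z.1) := by
          have hmk : pxy (z.1, z.2) = pxy z := by rw [Prod.mk.eta]
          rw [hmk] at hlog
          linarith
        rw [hsolve, ← Finset.mul_sum]
        ring
    rw [Finset.sum_congr rfl (fun z _ => pointwise z)]
    rw [Finset.sum_sub_distrib, Finset.sum_add_distrib, Finset.sum_comm, ← Finset.mul_sum]
    have hA : ∀ j : {j // j ∈ S},
        (∑ z : (Fin n → α) × ({j // j ∈ S} → β),
            pxy z * Real.logb 2 (pjx (j : Fin n) (z.2 j, z.1)))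
          = ∑ d : β × (Fin n → α), pjx (j : Fin n) d * Real.logb 2 (pjx (j : Fin n) d) :=
      fun j => (sum_prob'_comp_mul μ XY (fun z => (z.2 j, z.1))
        (fun d => Real.logb 2 (pjx (j : Fin n) d))).symm
    have hB : (∑ z : (Fin n → α) × ({j // j ∈ S} → β), pxy z * Real.logb 2 (px z.1))
        = ∑ x, px x * Real.logb 2 (px x) :=
      (sum_prob'_comp_mul μ XY (fun z => z.1) (fun d => Real.logb 2 (px d))).symm
    rw [Finset.sum_congr rfl (fun j _ => hA j), hB]
  have hent : ent' μ XY = -∑ z, pxy z * Real.logb 2 (pxy z) := rfl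
  have hentj : ∀ j : Fin n, ent' μ (fun ω => (Y j ω, Xp ω))
      = -∑ d : β × (Fin n → α), pjx j d * Real.logb 2 (pjx j d) := fun j => rfl
  have hentX : ent' μ Xp = -∑ x, px x * Real.logb 2 (px x) := rfl
  have goal1 : ent' μ XY = (∑ j : {j // j ∈ S}, ent' μ (fun ω => (Y (j : Fin n) ω, Xp ω)))
      + ent' μ Xp - (S.card : ℝ) * ent' μ Xp := by
    rw [hent, key, hentX]
    rw [show (∑ j : {j // j ∈ S}, ent' μ (fun ω => (Y (j : Fin n) ω, Xp ω)))
        = ∑ j : {j // j ∈ S}, -∑ d : β × (Fin n → α),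
            pjx (j : Fin n) d * Real.logb 2 (pjx (j : Fin n) d) from
      Finset.sum_congr rfl fun j _ => hentj j]
    rw [Finset.sum_neg_distrib]
    ring
  rw [goal1]
  congr 1
  congr 1
  rw [Finset.univ_eq_attach]
  exact Finset.sum_attach S (fun j => ent' μ (fun ω => (Y j ω, Xp ω)))
end ci


section indX
variable {Ω α : Type*} [Fintype Ω] [Fintype α] [DecidableEq α] {n : ℕ}
    (μ : Ω → ℝ) (hμ0 : ∀ ω, 0 ≤ μ ω) (hμ1 : ∑ ω, μ ω = 1)
    (X : Fin n → Ω → α)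

include hμ1 in
lemma entX_subset
    (hX : ∀ x : Fin n → α,
      prob' μ (fun ω i => X i ω) x = ∏ i, prob' μ (X i) (x i))
    (S : Finset (Fin n)) :
    ent' μ (fun ω (i : {i // i ∈ S}) => X i ω) = ∑ i ∈ S, ent' μ (X i) := by
  classical
  have hmarg : ∀ xs : {i // i ∈ S} → α,
      prob' μ (fun ω (i : {i // i ∈ S}) => X i ω) xs
        = ∏ j : {i // i ∈ S}, prob' μ (X (j : Fin n)) (xs j) := by
    intro xs
    have h0 : prob' μ (fun ω (i : {i // i ∈ S}) => X i ω) xs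
        = prob' μ (fun ω => (fun x : Fin n → α => fun j : {i // i ∈ S} => x j)
            ((fun ω i => X i ω) ω)) xs := rfl
    rw [h0, prob'_comp μ (fun ω i => X i ω) (fun x => fun j : {i // i ∈ S} => x j) xs]
    rw [Finset.sum_congr rfl (fun x _ => hX x)]
    rw [sum_filter_prod' S xs (fun i t => prob' μ (X i) t)]
    rw [Finset.prod_congr rfl
      (fun i (_ : i ∈ Sᶜ) => by rw [prob'_total μ (X i), hμ1]),
      Finset.prod_const_one, mul_one]
  rw [ent'_of_prod μ _ (fun j : {i // i ∈ S} => prob' μ (X (j : Fin n))) hmarg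
    (fun j => by rw [prob'_total μ (X (j : Fin n)), hμ1])]
  have hterm : ∀ j : {i // i ∈ S},
      (-∑ t, prob' μ (X (j : Fin n)) t * Real.logb 2 (prob' μ (X (j : Fin n)) t))
        = ent' μ (X (j : Fin n)) := fun j => rfl
  rw [Finset.sum_congr rfl (fun j _ => hterm j), Finset.univ_eq_attach]
  exact Finset.sum_attach S (fun i => ent' μ (X i))
end indX

/-- If `X₁,…,Xₙ` are mutually independent and `Y₁,…,Yₙ` are conditionally
independent given `(X₁,…,Xₙ)` (expressed multiplicatively:
`P(X=x, Y=y)·P(X=x)^{n-1} = Π_j P(Y_j=y_j, X=x)`), then the cut-set function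
`F(A) = I(X_A ; Y_{Aᶜ} | X_{Aᶜ})` is submodular. -/
theorem stmt_8 {Ω α β : Type*} [Fintype Ω] [Fintype α] [DecidableEq α]
    [Fintype β] [DecidableEq β] {n : ℕ}
    (μ : Ω → ℝ) (hμ0 : ∀ ω, 0 ≤ μ ω) (hμ1 : ∑ ω, μ ω = 1)
    (X : Fin n → Ω → α) (Y : Fin n → Ω → β)
    (hX : ∀ x : Fin n → α,
      prob' μ (fun ω i => X i ω) x = ∏ i, prob' μ (X i) (x i))
    (hY : ∀ (x : Fin n → α) (y : Fin n → β),
      prob' μ (fun ω => ((fun i => X i ω), (fun j => Y j ω))) (x, y) *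
          (prob' μ (fun ω i => X i ω) x) ^ (n - 1)
        = ∏ j, prob' μ (fun ω => (Y j ω, fun i => X i ω)) (y j, x))
    (F : Finset (Fin n) → ℝ)
    (hF : ∀ A : Finset (Fin n), F A =
      condMI' μ (fun ω (i : {i // i ∈ A}) => X i ω)
        (fun ω (j : {j // j ∈ Aᶜ}) => Y j ω)
        (fun ω (i : {i // i ∈ Aᶜ}) => X i ω)) :
    ∀ A B : Finset (Fin n), F (A ∪ B) + F (A ∩ B) ≤ F A + F B := by
  classical
  set e : Finset (Fin n) → ℝ := fun S =>
    ent' μ (fun ω (j : {j // j ∈ S}) => (X (j : Fin n) ω, Y (j : Fin n) ω)) with he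
  set HX : ℝ := ent' μ (fun ω (i : Fin n) => X i ω) with hHX
  set c : Fin n → ℝ := fun j =>
    ent' μ (X j) + ent' μ (fun ω => (Y j ω, fun i => X i ω)) - HX with hc
  have hFA : ∀ A : Finset (Fin n), F A = e Aᶜ - ∑ j ∈ Aᶜ, c j := by
    intro A
    rw [hF A]
    have g1 : ent' μ (fun ω => ((fun i : {i // i ∈ A} => X i ω),
        (fun i : {i // i ∈ Aᶜ} => X i ω))) = HX := by
      refine ent'_comp_inj μ (fun ω (i : Fin n) => X i ω)
        (fun x => ((fun i : {i // i ∈ A} => x i), (fun i : {i // i ∈ Aᶜ} => x i))) ?_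
      intro x x' h
      funext i
      by_cases hi : i ∈ A
      · exact congrFun (congrArg Prod.fst h) ⟨i, hi⟩
      · exact congrFun (congrArg Prod.snd h) ⟨i, Finset.mem_compl.mpr hi⟩
    have g2 : ent' μ (fun ω => ((fun j : {j // j ∈ Aᶜ} => Y j ω),
        (fun i : {i // i ∈ Aᶜ} => X i ω))) = e Aᶜ := by
      refine ent'_comp_inj μ
        (fun ω (j : {j // j ∈ Aᶜ}) => (X (j : Fin n) ω, Y (j : Fin n) ω))
        (fun g => ((fun j => (g j).2), (fun j => (g j).1))) ?_
      intro g g' h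
      funext j
      exact Prod.ext (congrFun (congrArg Prod.snd h) j) (congrFun (congrArg Prod.fst h) j)
    have g3 : ent' μ (fun ω => (((fun i : {i // i ∈ A} => X i ω),
          (fun j : {j // j ∈ Aᶜ} => Y j ω)), (fun i : {i // i ∈ Aᶜ} => X i ω)))
        = ent' μ (fun ω => ((fun i => X i ω), (fun j : {j // j ∈ Aᶜ} => Y j ω))) := by
      refine ent'_comp_inj μ
        (fun ω => ((fun i => X i ω), (fun j : {j // j ∈ Aᶜ} => Y j ω)))
        (fun p => (((fun i : {i // i ∈ A} => p.1 i), p.2),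
          (fun i : {i // i ∈ Aᶜ} => p.1 i))) ?_
      intro p p' h
      have h1 := congrArg Prod.fst (congrArg Prod.fst h)
      have h2 := congrArg Prod.snd (congrArg Prod.fst h)
      have h3 := congrArg Prod.snd h
      refine Prod.ext ?_ h2
      funext i
      by_cases hi : i ∈ A
      · exact congrFun h1 ⟨i, hi⟩
      · exact congrFun h3 ⟨i, Finset.mem_compl.mpr hi⟩
    have g4 := entX_subset μ hμ1 X hX Aᶜ
    have g5 := entXY_subset μ hμ0 hμ1 X Y hY Aᶜ
    have hcA : ∑ j ∈ Aᶜ, c j = (∑ j ∈ Aᶜ, ent' μ (X j))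
        + (∑ j ∈ Aᶜ, ent' μ (fun ω => (Y j ω, fun i => X i ω)))
        - (Aᶜ.card : ℝ) * HX := by
      rw [hc]
      rw [Finset.sum_sub_distrib, Finset.sum_add_distrib, Finset.sum_const, nsmul_eq_mul]
    simp only [condMI', condEnt']
    rw [g1, g2, g3, g4, g5, hcA]
    ring
  have esub : ∀ S T : Finset (Fin n), e (S ∪ T) + e (S ∩ T) ≤ e S + e T := by
    intro S T
    have h0 := condMI'_nonneg μ hμ0 hμ1
      (fun ω (j : {j // j ∈ S \ T}) => (X (j : Fin n) ω, Y (j : Fin n) ω))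
      (fun ω (j : {j // j ∈ T \ S}) => (X (j : Fin n) ω, Y (j : Fin n) ω))
      (fun ω (j : {j // j ∈ S ∩ T}) => (X (j : Fin n) ω, Y (j : Fin n) ω))
    simp only [condMI', condEnt'] at h0
    have k1 : ent' μ (fun ω => ((fun j : {j // j ∈ S \ T} => (X (j : Fin n) ω, Y (j : Fin n) ω)),
        (fun j : {j // j ∈ S ∩ T} => (X (j : Fin n) ω, Y (j : Fin n) ω)))) = e S := by
      refine ent'_comp_inj μ
        (fun ω (j : {j // j ∈ S}) => (X (j : Fin n) ω, Y (j : Fin n) ω))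
        (fun g => ((fun j : {j // j ∈ S \ T} => g ⟨j.1, (Finset.mem_sdiff.mp j.2).1⟩),
          (fun j : {j // j ∈ S ∩ T} => g ⟨j.1, (Finset.mem_inter.mp j.2).1⟩))) ?_
      intro g g' h
      funext i
      by_cases hiT : (i : Fin n) ∈ T
      · have hm : (i : Fin n) ∈ S ∩ T := Finset.mem_inter.mpr ⟨i.2, hiT⟩
        have := congrFun (congrArg Prod.snd h) ⟨(i : Fin n), hm⟩
        simpa using this
      · have hm : (i : Fin n) ∈ S \ T := Finset.mem_sdiff.mpr ⟨i.2, hiT⟩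
        have := congrFun (congrArg Prod.fst h) ⟨(i : Fin n), hm⟩
        simpa using this
    have k2 : ent' μ (fun ω => ((fun j : {j // j ∈ T \ S} => (X (j : Fin n) ω, Y (j : Fin n) ω)),
        (fun j : {j // j ∈ S ∩ T} => (X (j : Fin n) ω, Y (j : Fin n) ω)))) = e T := by
      refine ent'_comp_inj μ
        (fun ω (j : {j // j ∈ T}) => (X (j : Fin n) ω, Y (j : Fin n) ω))
        (fun g => ((fun j : {j // j ∈ T \ S} => g ⟨j.1, (Finset.mem_sdiff.mp j.2).1⟩),
          (fun j : {j // j ∈ S ∩ T} => g ⟨j.1, (Finset.mem_inter.mp j.2).2⟩))) ?_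
      intro g g' h
      funext i
      by_cases hiS : (i : Fin n) ∈ S
      · have hm : (i : Fin n) ∈ S ∩ T := Finset.mem_inter.mpr ⟨hiS, i.2⟩
        have := congrFun (congrArg Prod.snd h) ⟨(i : Fin n), hm⟩
        simpa using this
      · have hm : (i : Fin n) ∈ T \ S := Finset.mem_sdiff.mpr ⟨i.2, hiS⟩
        have := congrFun (congrArg Prod.fst h) ⟨(i : Fin n), hm⟩
        simpa using this
    have k3 : ent' μ (fun ω =>
        (((fun j : {j // j ∈ S \ T} => (X (j : Fin n) ω, Y (j : Fin n) ω)),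
          (fun j : {j // j ∈ T \ S} => (X (j : Fin n) ω, Y (j : Fin n) ω))),
         (fun j : {j // j ∈ S ∩ T} => (X (j : Fin n) ω, Y (j : Fin n) ω)))) = e (S ∪ T) := by
      refine ent'_comp_inj μ
        (fun ω (j : {j // j ∈ S ∪ T}) => (X (j : Fin n) ω, Y (j : Fin n) ω))
        (fun g => (((fun j : {j // j ∈ S \ T} =>
            g ⟨j.1, Finset.mem_union.mpr (Or.inl (Finset.mem_sdiff.mp j.2).1)⟩),
          (fun j : {j // j ∈ T \ S} =>
            g ⟨j.1, Finset.mem_union.mpr (Or.inr (Finset.mem_sdiff.mp j.2).1)⟩)),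
          (fun j : {j // j ∈ S ∩ T} =>
            g ⟨j.1, Finset.mem_union.mpr (Or.inl (Finset.mem_inter.mp j.2).1)⟩))) ?_
      intro g g' h
      have h1 := congrArg Prod.fst (congrArg Prod.fst h)
      have h2 := congrArg Prod.snd (congrArg Prod.fst h)
      have h3 := congrArg Prod.snd h
      funext i
      by_cases hiS : (i : Fin n) ∈ S
      · by_cases hiT : (i : Fin n) ∈ T
        · have hm : (i : Fin n) ∈ S ∩ T := Finset.mem_inter.mpr ⟨hiS, hiT⟩
          have := congrFun h3 ⟨(i : Fin n), hm⟩
          simpa using this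
        · have hm : (i : Fin n) ∈ S \ T := Finset.mem_sdiff.mpr ⟨hiS, hiT⟩
          have := congrFun h1 ⟨(i : Fin n), hm⟩
          simpa using this
      · have hiT : (i : Fin n) ∈ T := by
          rcases Finset.mem_union.mp i.2 with h' | h'
          · exact absurd h' hiS
          · exact h'
        have hm : (i : Fin n) ∈ T \ S := Finset.mem_sdiff.mpr ⟨hiT, hiS⟩
        have := congrFun h2 ⟨(i : Fin n), hm⟩
        simpa using this
    rw [k1, k2, k3] at h0
    have k4 : ent' μ (fun ω (j : {j // j ∈ S ∩ T}) => (X (j : Fin n) ω, Y (j : Fin n) ω))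
        = e (S ∩ T) := rfl
    rw [k4] at h0
    linarith
  intro A B
  rw [hFA A, hFA B, hFA (A ∪ B), hFA (A ∩ B)]
  have hmod : (∑ j ∈ (A ∪ B)ᶜ, c j) + ∑ j ∈ (A ∩ B)ᶜ, c j
      = (∑ j ∈ Aᶜ, c j) + ∑ j ∈ Bᶜ, c j := by
    rw [Finset.compl_union, Finset.compl_inter, add_comm]
    exact Finset.sum_union_inter
  have hsub : e ((A ∪ B)ᶜ) + e ((A ∩ B)ᶜ) ≤ e Aᶜ + e Bᶜ := by
    rw [Finset.compl_union, Finset.compl_inter]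
    have h := esub Aᶜ Bᶜ
    linarith
  linarith
end

section
/- Let ε_{ij} ∈ [0,1] for i,j ∈ V = {1,…,n}. Let X_i, i ∈ V, be i.i.d. Bernoulli(1/2) and, given the X's, let Y_j for a cut Ω and each j ∈ Ωᶜ receive from each i ∈ Ω independently either X_i (with probability 1 − ε_{ij}) or an erasure symbol e (with probability ε_{ij}), with all erasure events independent. Then I(X_Ω ; Y_{Ωᶜ} | X_{Ωᶜ}) = Σ_{i ∈ Ω} (1 − Π_{j ∈ Ωᶜ} ε_{ij}). -/
open Finset

/-! ### Auxiliary entropy machinery -/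

noncomputable def entD {α : Type*} [Fintype α] (p : α → ℝ) : ℝ :=
  -∑ a : α, p a * Real.logb 2 (p a)

lemma sum_pi_eq {ι : Type*} [Fintype ι] [DecidableEq ι] {κ : ι → Type*}
    [∀ i, Fintype (κ i)] (f : ∀ i, κ i → ℝ) :
    ∑ g : (∀ i, κ i), ∏ i, f i (g i) = ∏ i, ∑ a, f i a := by
  classical
  rw [Finset.prod_univ_sum, Fintype.piFinset_univ]

lemma mul_logb_split (x y : ℝ) :
    x * y * Real.logb 2 (x * y) = x * y * Real.logb 2 x + x * y * Real.logb 2 y := by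
  rcases eq_or_ne x 0 with h | hx; · simp [h]
  rcases eq_or_ne y 0 with h | hy; · simp [h]
  rw [Real.logb_mul hx hy]; ring

lemma logb_half : Real.logb 2 (1/2 : ℝ) = -1 := by
  rw [one_div, Real.logb_inv, Real.logb_self_eq_one] <;> norm_num

lemma entD_prod {α β : Type*} [Fintype α] [Fintype β] (p : α → ℝ) (q : β → ℝ) :
    entD (fun x : α × β => p x.1 * q x.2) =
      (∑ b, q b) * entD p + (∑ a, p a) * entD q := by
  unfold entD
  rw [Fintype.sum_prod_type]
  have : ∀ a b, p a * q b * Real.logb 2 (p a * q b)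
      = q b * (p a * Real.logb 2 (p a)) + p a * (q b * Real.logb 2 (q b)) := by
    intro a b; have := mul_logb_split (p a) (q b); nlinarith [this]
  simp only [this]
  simp only [Finset.sum_add_distrib, ← Finset.mul_sum, ← Finset.sum_mul]
  ring

lemma entD_pi {ι : Type*} [Fintype ι] [DecidableEq ι] {κ : ι → Type*}
    [∀ i, Fintype (κ i)] (f : ∀ i, κ i → ℝ) (h1 : ∀ i, ∑ a, f i a = 1) :
    entD (fun g : ∀ i, κ i => ∏ i, f i (g i)) = ∑ i, entD (f i) := by
  classical
  unfold entD
  have step1 : ∀ g : ∀ i, κ i, (∏ i, f i (g i)) * Real.logb 2 (∏ i, f i (g i))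
      = ∑ i, (∏ k, f k (g k)) * Real.logb 2 (f i (g i)) := by
    intro g
    by_cases h : ∀ i, f i (g i) ≠ 0
    · rw [Real.logb_prod _ _ (fun i _ => h i), Finset.mul_sum]
    · push_neg at h
      obtain ⟨i, hi⟩ := h
      have hz : (∏ k, f k (g k)) = 0 := Finset.prod_eq_zero (Finset.mem_univ i) hi
      simp [hz]
  have main : ∀ i : ι, (∑ g : ∀ i, κ i, (∏ k, f k (g k)) * Real.logb 2 (f i (g i)))
      = ∑ a, f i a * Real.logb 2 (f i a) := by
    intro i
    set v : κ i → ℝ := fun a => f i a * Real.logb 2 (f i a) with hv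
    have key : ∀ g : ∀ i, κ i, (∏ k, f k (g k)) * Real.logb 2 (f i (g i))
        = ∏ k, (Function.update f i v) k (g k) := by
      intro g
      rw [Finset.prod_eq_mul_prod_sdiff_singleton_of_mem (Finset.mem_univ i)
          (fun k => (Function.update f i v) k (g k)),
        Finset.prod_eq_mul_prod_sdiff_singleton_of_mem (Finset.mem_univ i)
          (fun k => f k (g k))]
      rw [Function.update_self]
      have hne : ∀ k ∈ Finset.univ \ {i},
          (Function.update f i v) k (g k) = f k (g k) := by
        intro k hk
        have hki : k ≠ i := by
          intro h
          exact absurd (Finset.mem_singleton.mpr h) (Finset.mem_sdiff.mp hk).2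
        rw [Function.update_of_ne hki]
      rw [Finset.prod_congr rfl hne, hv]
      ring
    rw [Finset.sum_congr rfl (fun g _ => key g), sum_pi_eq]
    rw [Finset.prod_eq_mul_prod_sdiff_singleton_of_mem (Finset.mem_univ i)]
    rw [Function.update_self]
    have hone : ∀ k ∈ Finset.univ \ {i}, (∑ a, (Function.update f i v) k a) = 1 := by
      intro k hk
      have hki : k ≠ i := by
        intro h
        exact absurd (Finset.mem_singleton.mpr h) (Finset.mem_sdiff.mp hk).2
      rw [Finset.sum_congr rfl (fun a _ => by rw [Function.update_of_ne hki])]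
      exact h1 k
    rw [Finset.prod_congr rfl hone, Finset.prod_const_one, mul_one]
  simp only [step1]
  rw [Finset.sum_comm]
  rw [Finset.sum_congr rfl (fun i _ => main i)]
  rw [neg_eq_iff_eq_neg, ← Finset.sum_neg_distrib]
  simp

lemma entD_equiv {α β : Type*} [Fintype α] [Fintype β] (e : α ≃ β) (p : β → ℝ) :
    entD (fun a => p (e a)) = entD p := by
  unfold entD
  exact congrArg Neg.neg (Equiv.sum_comp e fun b => p b * Real.logb 2 (p b))

lemma entD_half : entD (fun _ : Bool => (1/2 : ℝ)) = 1 := by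
  unfold entD
  rw [Fintype.sum_bool, logb_half]
  norm_num

lemma sum_unif {ι : Type*} [Fintype ι] [DecidableEq ι] :
    ∑ z : (ι → Bool), ∏ _i : ι, (1/2 : ℝ) = 1 := by
  have h := sum_pi_eq (κ := fun _ : ι => Bool) (fun _ _ => (1/2 : ℝ))
  rw [h]
  simp

lemma entD_unif {ι : Type*} [Fintype ι] [DecidableEq ι] :
    entD (fun _z : (ι → Bool) => ∏ _i : ι, (1/2 : ℝ)) = (Fintype.card ι : ℝ) := by
  have h := entD_pi (κ := fun _ : ι => Bool) (fun _ _ => (1/2 : ℝ))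
    (fun _ => by rw [Fintype.sum_bool]; norm_num)
  rw [h]
  rw [Finset.sum_congr rfl (fun i _ => entD_half)]
  simp [Finset.card_univ]

lemma prod_dite_mem {M : Type*} [CommMonoid M] {ι : Type*} [Fintype ι] [DecidableEq ι]
    (s : Finset ι) (F : ∀ i : ι, i ∈ s → M) :
    ∏ i : ι, (if h : i ∈ s then F i h else 1) = ∏ i : {i // i ∈ s}, F i.1 i.2 := by
  have h1 : ∏ i : {i // i ∈ s}, F i.1 i.2
      = ∏ i ∈ s.attach, (if h : i.1 ∈ s then F i.1 h else 1) := by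
    rw [Finset.univ_eq_attach]
    exact Finset.prod_congr rfl fun i _ => (dif_pos i.2).symm
  have h2 : ∏ i ∈ s.attach, (if h : (i : ι) ∈ s then F i.1 h else 1)
      = ∏ i ∈ s, (if h : i ∈ s then F i h else 1) :=
    Finset.prod_attach s (fun i => if h : i ∈ s then F i h else 1)
  rw [h1, h2, ← Finset.prod_mul_prod_compl s (fun i => if h : i ∈ s then F i h else 1)]
  rw [Finset.prod_eq_one (fun i hi => dif_neg (Finset.mem_compl.mp hi)), mul_one]

lemma prod_split {M : Type*} [CommMonoid M] {ι : Type*} [Fintype ι] [DecidableEq ι]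
    (s : Finset ι) (G : ι → M) :
    ∏ i : ι, G i = (∏ i : {i // i ∈ s}, G i.1) * ∏ i : {i // i ∈ sᶜ}, G i.1 := by
  rw [Finset.prod_coe_sort, Finset.prod_coe_sort, Finset.prod_mul_prod_compl]

/-! ### Per-link and per-node distributions -/

noncomputable def W {n : ℕ} (ε : Fin n → Fin n → ℝ) (i j : Fin n) (b : Bool) :
    Option Bool → ℝ
  | none => ε i j
  | some c => if c = b then 1 - ε i j else 0

noncomputable def Hb {n : ℕ} (ε : Fin n → Fin n → ℝ) (i j : Fin n) : ℝ :=
  -(ε i j * Real.logb 2 (ε i j)) - ((1 - ε i j) * Real.logb 2 (1 - ε i j))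

lemma sum_W {n : ℕ} (ε : Fin n → Fin n → ℝ) (i j : Fin n) (b : Bool) :
    ∑ v : Option Bool, W ε i j b v = 1 := by
  rw [Fintype.sum_option]
  cases b <;> simp [W]

lemma entD_W {n : ℕ} (ε : Fin n → Fin n → ℝ) (i j : Fin n) (b : Bool) :
    entD (W ε i j b) = Hb ε i j := by
  unfold entD Hb
  rw [Fintype.sum_option]
  cases b <;> (simp [W, Fintype.sum_bool]; ring)

section
variable {n : ℕ} (ε : Fin n → Fin n → ℝ) (Ω : Finset (Fin n))

noncomputable def Q (i : Fin n) (b : Bool) (f : {j // j ∈ Ωᶜ} → Option Bool) : ℝ :=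
  ∏ j : {j // j ∈ Ωᶜ}, W ε i j.1 b (f j)

noncomputable def R (i : Fin n) (f : {j // j ∈ Ωᶜ} → Option Bool) : ℝ :=
  (1/2) * Q ε Ω i false f + (1/2) * Q ε Ω i true f

lemma sum_Q (i : Fin n) (b : Bool) : ∑ f, Q ε Ω i b f = 1 := by
  unfold Q
  rw [sum_pi_eq]
  exact Finset.prod_eq_one fun j _ => sum_W ε i j.1 b

lemma entD_Q (i : Fin n) (b : Bool) :
    entD (Q ε Ω i b) = ∑ j : {j // j ∈ Ωᶜ}, Hb ε i j.1 := by
  have h := entD_pi (fun (j : {j // j ∈ Ωᶜ}) => W ε i j.1 b)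
    (fun j => sum_W ε i j.1 b)
  exact h.trans (Finset.sum_congr rfl fun j _ => entD_W ε i j.1 b)

lemma sum_R (i : Fin n) : ∑ f, R ε Ω i f = 1 := by
  unfold R
  rw [Finset.sum_add_distrib, ← Finset.mul_sum, ← Finset.mul_sum, sum_Q, sum_Q]
  norm_num

lemma entD_mix2 {β : Type*} [Fintype β] (q : Bool → β → ℝ)
    (hs : ∀ b, ∑ f, q b f = 1) :
    entD (fun x : Bool × β => (1/2) * q x.1 x.2)
      = 1 + (1/2) * entD (q false) + (1/2) * entD (q true) := by
  unfold entD
  rw [Fintype.sum_prod_type, Fintype.sum_bool]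
  have key : ∀ b, ∑ f, (1/2 : ℝ) * q b f * Real.logb 2 ((1/2) * q b f)
      = -(1/2 : ℝ) + (1/2) * ∑ f, q b f * Real.logb 2 (q b f) := by
    intro b
    have : ∀ f, (1/2 : ℝ) * q b f * Real.logb 2 ((1/2) * q b f)
        = -(1/2) * q b f + (1/2) * (q b f * Real.logb 2 (q b f)) := by
      intro f
      have h := mul_logb_split (1/2) (q b f)
      rw [logb_half] at h
      linarith
    rw [Finset.sum_congr rfl fun f _ => this f, Finset.sum_add_distrib,
      ← Finset.mul_sum, ← Finset.mul_sum, hs b]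
    norm_num
  simp only [key]
  ring

lemma entD_P (i : Fin n) :
    entD (fun x : Bool × ({j // j ∈ Ωᶜ} → Option Bool) => (1/2) * Q ε Ω i x.1 x.2)
      = 1 + ∑ j : {j // j ∈ Ωᶜ}, Hb ε i j.1 := by
  rw [entD_mix2 _ (fun b => sum_Q ε Ω i b), entD_Q, entD_Q]
  ring

lemma sum_P (i : Fin n) :
    ∑ x : Bool × ({j // j ∈ Ωᶜ} → Option Bool), (1/2) * Q ε Ω i x.1 x.2 = 1 := by
  rw [Fintype.sum_prod_type, Fintype.sum_bool]
  rw [← Finset.mul_sum, ← Finset.mul_sum, sum_Q, sum_Q]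
  norm_num

lemma entD_R (i : Fin n) :
    entD (R ε Ω i) = (∑ j : {j // j ∈ Ωᶜ}, Hb ε i j.1) + 1
      - ∏ j : {j // j ∈ Ωᶜ}, ε i j.1 := by
  classical
  set P0 : ℝ := ∏ j : {j // j ∈ Ωᶜ}, ε i j.1 with hP0
  have hQnone : ∀ b, Q ε Ω i b (fun _ => none) = P0 := by
    intro b; unfold Q; simp [W, hP0, Finset.univ_eq_attach]
  have key : ∀ f, R ε Ω i f * Real.logb 2 (R ε Ω i f)
      = ((1/2) * (Q ε Ω i false f * Real.logb 2 (Q ε Ω i false f))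
          - (1/2) * Q ε Ω i false f)
        + ((1/2) * (Q ε Ω i true f * Real.logb 2 (Q ε Ω i true f))
          - (1/2) * Q ε Ω i true f)
        + (if f = (fun _ => none) then P0 else 0) := by
    intro f
    by_cases hf : f = fun _ => none
    · subst hf
      rw [if_pos rfl]
      have hR : R ε Ω i (fun _ => none) = P0 := by
        unfold R; rw [hQnone, hQnone]; ring
      rw [hR, hQnone, hQnone]
      ring
    · rw [if_neg hf]
      have hex : ∃ j, f j ≠ none := by
        by_contra h; push_neg at h; exact hf (funext fun j => h j)
      obtain ⟨j, hj⟩ := hex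
      obtain ⟨t, ht⟩ : ∃ t, f j = some t := by
        cases hfj : f j with
        | none => exact absurd hfj hj
        | some t => exact ⟨t, rfl⟩
      have hz : Q ε Ω i (!t) f = 0 := by
        apply Finset.prod_eq_zero (Finset.mem_univ j)
        rw [ht]
        cases t <;> simp [W]
      cases t with
      | false =>
        have hz' : Q ε Ω i true f = 0 := by simpa using hz
        have hR : R ε Ω i f = (1/2) * Q ε Ω i false f := by
          unfold R; rw [hz']; ring
        rw [hR, hz']
        have h := mul_logb_split (1/2) (Q ε Ω i false f)
        rw [logb_half] at h
        rw [h]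
        simp only [Real.logb_zero, mul_zero, zero_mul]
        ring
      | true =>
        have hz' : Q ε Ω i false f = 0 := by simpa using hz
        have hR : R ε Ω i f = (1/2) * Q ε Ω i true f := by
          unfold R; rw [hz']; ring
        rw [hR, hz']
        have h := mul_logb_split (1/2) (Q ε Ω i true f)
        rw [logb_half] at h
        rw [h]
        simp only [Real.logb_zero, mul_zero, zero_mul]
        ring
  have hsum : ∀ b, ∑ f, ((1/2) * (Q ε Ω i b f * Real.logb 2 (Q ε Ω i b f))
      - (1/2) * Q ε Ω i b f) = -(1/2) * entD (Q ε Ω i b) - 1/2 := by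
    intro b
    rw [Finset.sum_sub_distrib, ← Finset.mul_sum, ← Finset.mul_sum, sum_Q]
    unfold entD
    ring
  have hind : (∑ f : {j // j ∈ Ωᶜ} → Option Bool,
      if f = (fun _ => none) then P0 else 0) = P0 := by simp
  unfold entD
  rw [Finset.sum_congr rfl fun f _ => key f, Finset.sum_add_distrib,
    Finset.sum_add_distrib, hsum, hsum, hind, entD_Q, entD_Q]
  ring
end

/-! ### Marginalization lemmas -/

section
variable {n : ℕ} (ε : Fin n → Fin n → ℝ) (Ω : Finset (Fin n))

lemma sum_pi2 (f : Fin n → Fin n → Bool → ℝ) :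
    ∑ E : Fin n → Fin n → Bool, ∏ i, ∏ j, f i j (E i j)
      = ∏ i, ∏ j, ∑ b, f i j b := by
  have h1 : ∑ E : Fin n → Fin n → Bool, ∏ i, ∏ j, f i j (E i j)
      = ∏ i, ∑ e : Fin n → Bool, ∏ j, f i j (e j) :=
    sum_pi_eq (fun i (e : Fin n → Bool) => ∏ j, f i j (e j))
  rw [h1]
  exact Finset.prod_congr rfl fun i _ => sum_pi_eq (f i)

lemma sumE (a : Fin n → Bool) (y : {j // j ∈ Ωᶜ} → {i // i ∈ Ω} → Option Bool) :
    ∑ E : Fin n → Fin n → Bool,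
      (if (fun (j : {j // j ∈ Ωᶜ}) (i : {i // i ∈ Ω}) =>
            if E i.1 j.1 then (none : Option Bool) else some (a i.1)) = y
        then ∏ i, ∏ j, (if E i j then ε i j else 1 - ε i j) else 0)
      = ∏ i : {i // i ∈ Ω}, Q ε Ω i.1 (a i.1) (fun j => y j i) := by
  classical
  set W2 : Fin n → Fin n → Bool → ℝ := fun i j b =>
    if hij : i ∈ Ω ∧ j ∈ Ωᶜ then
      (if (if b then (none : Option Bool) else some (a i)) = y ⟨j, hij.2⟩ ⟨i, hij.1⟩
        then (if b then ε i j else 1 - ε i j) else 0)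
    else (if b then ε i j else 1 - ε i j) with hW2
  have step1 : ∀ E : Fin n → Fin n → Bool,
      (if (fun (j : {j // j ∈ Ωᶜ}) (i : {i // i ∈ Ω}) =>
            if E i.1 j.1 then (none : Option Bool) else some (a i.1)) = y
        then ∏ i, ∏ j, (if E i j then ε i j else 1 - ε i j) else 0)
      = ∏ i, ∏ j, W2 i j (E i j) := by
    intro E
    by_cases hY : (fun (j : {j // j ∈ Ωᶜ}) (i : {i // i ∈ Ω}) =>
        if E i.1 j.1 then (none : Option Bool) else some (a i.1)) = y
    · rw [if_pos hY]
      refine Finset.prod_congr rfl fun i _ => Finset.prod_congr rfl fun j _ => ?_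
      by_cases hij : i ∈ Ω ∧ j ∈ Ωᶜ
      · have hyy := congrFun (congrFun hY ⟨j, hij.2⟩) ⟨i, hij.1⟩
        simp only [hW2]
        rw [dif_pos hij, if_pos hyy]
      · simp only [hW2]
        rw [dif_neg hij]
    · rw [if_neg hY]
      have hex : ∃ (j : {j // j ∈ Ωᶜ}) (i : {i // i ∈ Ω}),
          (if E i.1 j.1 then (none : Option Bool) else some (a i.1)) ≠ y j i := by
        by_contra h; push_neg at h
        exact hY (funext fun j => funext fun i => h j i)
      obtain ⟨j, i, hne⟩ := hex
      symm
      refine Finset.prod_eq_zero (Finset.mem_univ i.1)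
        (Finset.prod_eq_zero (Finset.mem_univ j.1) ?_)
      simp only [hW2]
      rw [dif_pos ⟨i.2, j.2⟩, if_neg hne]
  rw [Finset.sum_congr rfl fun E _ => step1 E, sum_pi2]
  have hw : ∀ i j, (∑ b, W2 i j b)
      = if hij : i ∈ Ω ∧ j ∈ Ωᶜ then W ε i j (a i) (y ⟨j, hij.2⟩ ⟨i, hij.1⟩) else 1 := by
    intro i j
    rw [Fintype.sum_bool]
    by_cases hij : i ∈ Ω ∧ j ∈ Ωᶜ
    · simp only [hW2]
      rw [dif_pos hij, dif_pos hij, dif_pos hij]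
      cases hy : y ⟨j, hij.2⟩ ⟨i, hij.1⟩ with
      | none => simp [W]
      | some c =>
        by_cases hc : a i = c <;> simp [W, hc, eq_comm]
    · simp only [hW2]
      rw [dif_neg hij, dif_neg hij, dif_neg hij]
      norm_num
  rw [Finset.prod_congr rfl fun i (_ : i ∈ Finset.univ) =>
    Finset.prod_congr rfl fun j (_ : j ∈ Finset.univ) => hw i j]
  have hrow : ∀ i : Fin n,
      (∏ j, if hij : i ∈ Ω ∧ j ∈ Ωᶜ then W ε i j (a i) (y ⟨j, hij.2⟩ ⟨i, hij.1⟩) else 1)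
      = if hi : i ∈ Ω then Q ε Ω i (a i) (fun j => y j ⟨i, hi⟩) else 1 := by
    intro i
    by_cases hi : i ∈ Ω
    · rw [dif_pos hi]
      have hterm : ∀ j : Fin n,
          (if hij : i ∈ Ω ∧ j ∈ Ωᶜ then W ε i j (a i) (y ⟨j, hij.2⟩ ⟨i, hij.1⟩) else 1)
          = (if hj : j ∈ Ωᶜ then W ε i j (a i) (y ⟨j, hj⟩ ⟨i, hi⟩) else 1) := by
        intro j
        by_cases hj : j ∈ Ωᶜ
        · rw [dif_pos (⟨hi, hj⟩ : i ∈ Ω ∧ j ∈ Ωᶜ), dif_pos hj]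
        · rw [dif_neg (fun hh => hj hh.2), dif_neg hj]
      rw [Finset.prod_congr rfl fun j _ => hterm j,
        prod_dite_mem Ωᶜ (fun j hj => W ε i j (a i) (y ⟨j, hj⟩ ⟨i, hi⟩))]
      rfl
    · rw [dif_neg hi]
      exact Finset.prod_eq_one fun j _ => by rw [dif_neg (fun hh => hi hh.1)]
  rw [Finset.prod_congr rfl fun i _ => hrow i,
    prod_dite_mem Ω (fun i hi => Q ε Ω i (a i) (fun j => y j ⟨i, hi⟩))]

lemma sumA1 (T : Fin n → Bool → ℝ) (z : {i // i ∈ Ωᶜ} → Bool) :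
    ∑ a : Fin n → Bool,
      (if (fun i : {i // i ∈ Ωᶜ} => a i.1) = z then ∏ i : Fin n, T i (a i) else 0)
      = (∏ i : {i // i ∈ Ω}, ∑ b, T i.1 b) * ∏ i : {i // i ∈ Ωᶜ}, T i.1 (z i) := by
  classical
  set c : Fin n → Bool → ℝ := fun i b =>
    if hi : i ∈ Ωᶜ then (if b = z ⟨i, hi⟩ then T i b else 0) else T i b with hc
  have step : ∀ a : Fin n → Bool,
      (if (fun i : {i // i ∈ Ωᶜ} => a i.1) = z then ∏ i : Fin n, T i (a i) else 0)
      = ∏ i : Fin n, c i (a i) := by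
    intro a
    by_cases hz : (fun i : {i // i ∈ Ωᶜ} => a i.1) = z
    · rw [if_pos hz]
      refine Finset.prod_congr rfl fun i _ => ?_
      by_cases hi : i ∈ Ωᶜ
      · simp only [hc]
        rw [dif_pos hi, if_pos (congrFun hz ⟨i, hi⟩)]
      · simp only [hc]
        rw [dif_neg hi]
    · rw [if_neg hz]
      have hex : ∃ i : {i // i ∈ Ωᶜ}, a i.1 ≠ z i := by
        by_contra h; push_neg at h
        exact hz (funext fun i => h i)
      obtain ⟨i, hne⟩ := hex
      symm
      refine Finset.prod_eq_zero (Finset.mem_univ i.1) ?_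
      simp only [hc]
      rw [dif_pos i.2, if_neg hne]
  rw [Finset.sum_congr rfl fun a _ => step a, sum_pi_eq]
  rw [prod_split Ω (fun i => ∑ b, c i b)]
  congr 1
  · refine Finset.prod_congr rfl fun i _ => Finset.sum_congr rfl fun b _ => ?_
    simp only [hc]
    rw [dif_neg (fun hh => (Finset.mem_compl.mp hh) i.2)]
  · refine Finset.prod_congr rfl fun i _ => ?_
    have : ∀ b, c i.1 b = if b = z i then T i.1 b else 0 := by
      intro b
      simp only [hc]
      rw [dif_pos i.2]
    rw [Fintype.sum_congr _ _ this]
    simp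
end

section
variable {n : ℕ} (ε : Fin n → Fin n → ℝ) (Ω : Finset (Fin n))

lemma sumA2 (T : Fin n → Bool → ℝ) (x : {i // i ∈ Ω} → Bool)
    (z : {i // i ∈ Ωᶜ} → Bool) :
    ∑ a : Fin n → Bool,
      (if (fun i : {i // i ∈ Ω} => a i.1) = x ∧ (fun i : {i // i ∈ Ωᶜ} => a i.1) = z
        then ∏ i : Fin n, T i (a i) else 0)
      = (∏ i : {i // i ∈ Ω}, T i.1 (x i)) * ∏ i : {i // i ∈ Ωᶜ}, T i.1 (z i) := by
  classical
  set c : Fin n → Bool → ℝ := fun i b =>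
    if hi : i ∈ Ω then (if b = x ⟨i, hi⟩ then T i b else 0)
    else (if b = z ⟨i, Finset.mem_compl.mpr hi⟩ then T i b else 0) with hc
  have step : ∀ a : Fin n → Bool,
      (if (fun i : {i // i ∈ Ω} => a i.1) = x ∧ (fun i : {i // i ∈ Ωᶜ} => a i.1) = z
        then ∏ i : Fin n, T i (a i) else 0)
      = ∏ i : Fin n, c i (a i) := by
    intro a
    by_cases hcond : (fun i : {i // i ∈ Ω} => a i.1) = x
        ∧ (fun i : {i // i ∈ Ωᶜ} => a i.1) = z
    · rw [if_pos hcond]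
      refine Finset.prod_congr rfl fun i _ => ?_
      by_cases hi : i ∈ Ω
      · simp only [hc]
        rw [dif_pos hi, if_pos (congrFun hcond.1 ⟨i, hi⟩)]
      · simp only [hc]
        rw [dif_neg hi, if_pos (congrFun hcond.2 ⟨i, Finset.mem_compl.mpr hi⟩)]
    · rw [if_neg hcond]
      symm
      by_cases hx : (fun i : {i // i ∈ Ω} => a i.1) = x
      · have hz : (fun i : {i // i ∈ Ωᶜ} => a i.1) ≠ z := fun h => hcond ⟨hx, h⟩
        have hex : ∃ i : {i // i ∈ Ωᶜ}, a i.1 ≠ z i := by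
          by_contra h; push_neg at h
          exact hz (funext fun i => h i)
        obtain ⟨i, hne⟩ := hex
        refine Finset.prod_eq_zero (Finset.mem_univ i.1) ?_
        have hiΩ : i.1 ∉ Ω := Finset.mem_compl.mp i.2
        simp only [hc]
        rw [dif_neg hiΩ, if_neg hne]
      · have hex : ∃ i : {i // i ∈ Ω}, a i.1 ≠ x i := by
          by_contra h; push_neg at h
          exact hx (funext fun i => h i)
        obtain ⟨i, hne⟩ := hex
        refine Finset.prod_eq_zero (Finset.mem_univ i.1) ?_
        simp only [hc]
        rw [dif_pos i.2, if_neg hne]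
  rw [Finset.sum_congr rfl fun a _ => step a, sum_pi_eq]
  rw [prod_split Ω (fun i => ∑ b, c i b)]
  congr 1
  · refine Finset.prod_congr rfl fun i _ => ?_
    have hterm : ∀ b, c i.1 b = if b = x i then T i.1 b else 0 := by
      intro b
      simp only [hc]
      rw [dif_pos i.2]
    rw [Fintype.sum_congr _ _ hterm]
    simp
  · refine Finset.prod_congr rfl fun i _ => ?_
    have hiΩ : i.1 ∉ Ω := Finset.mem_compl.mp i.2
    have hterm : ∀ b, c i.1 b = if b = z i then T i.1 b else 0 := by
      intro b
      simp only [hc]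
      rw [dif_neg hiΩ]
    rw [Fintype.sum_congr _ _ hterm]
    simp
end

/-! ### Closed forms for the probabilities -/

section
variable {n : ℕ} (ε : Fin n → Fin n → ℝ) (Ω : Finset (Fin n))
variable (μ : (Fin n → Bool) × (Fin n → Fin n → Bool) → ℝ)
variable (hμ : ∀ s, μ s = (1 / 2 : ℝ) ^ n *
      ∏ i : Fin n, ∏ j : Fin n, (if s.2 i j then ε i j else 1 - ε i j))

lemma sumE_triv : ∑ E : Fin n → Fin n → Bool,
    ∏ i, ∏ j, (if E i j then ε i j else 1 - ε i j) = 1 := by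
  have h := sum_pi2 (fun i j (b : Bool) => if b then ε i j else 1 - ε i j)
  refine h.trans ?_
  refine Finset.prod_eq_one fun i _ => Finset.prod_eq_one fun j _ => ?_
  rw [Fintype.sum_bool]
  norm_num

lemma half_pow : ((1:ℝ)/2) ^ n = ∏ _i : Fin n, (1/2 : ℝ) := by
  rw [Finset.prod_const, Finset.card_univ, Fintype.card_fin]

include hμ

lemma sum_mu (a : Fin n → Bool) :
    ∑ E : Fin n → Fin n → Bool, μ (a, E) = (1/2 : ℝ)^n := by
  have h : ∀ E : Fin n → Fin n → Bool, μ (a, E)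
      = (1/2 : ℝ)^n * ∏ i, ∏ j, (if E i j then ε i j else 1 - ε i j) :=
    fun E => hμ (a, E)
  rw [Finset.sum_congr rfl fun E _ => h E, ← Finset.mul_sum, sumE_triv, mul_one]

lemma prob3 (z : {i // i ∈ Ωᶜ} → Bool) :
    prob' μ (fun s => (fun i : {i // i ∈ Ωᶜ} => s.1 i.1)) z
      = ∏ _i : {i // i ∈ Ωᶜ}, (1/2 : ℝ) := by
  classical
  have h0 : prob' μ (fun s => (fun i : {i // i ∈ Ωᶜ} => s.1 i.1)) z
      = ∑ a : Fin n → Bool, ∑ E : Fin n → Fin n → Bool,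
        (if (fun i : {i // i ∈ Ωᶜ} => a i.1) = z then μ (a, E) else 0) := by
    rw [prob', Finset.sum_filter]
    exact Fintype.sum_prod_type _
  rw [h0]
  have step : ∀ a : Fin n → Bool,
      (∑ E : Fin n → Fin n → Bool,
        (if (fun i : {i // i ∈ Ωᶜ} => a i.1) = z then μ (a, E) else 0))
      = (if (fun i : {i // i ∈ Ωᶜ} => a i.1) = z
          then ∏ _i : Fin n, (1/2 : ℝ) else 0) := by
    intro a
    by_cases hz : (fun i : {i // i ∈ Ωᶜ} => a i.1) = z
    · rw [if_pos hz, Finset.sum_congr rfl fun E _ => if_pos hz,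
        sum_mu ε μ hμ a, half_pow]
    · rw [if_neg hz]
      exact Finset.sum_eq_zero fun E _ => if_neg hz
  rw [Finset.sum_congr rfl fun a _ => step a]
  have h1 : ∑ a : Fin n → Bool,
      (if (fun i : {i // i ∈ Ωᶜ} => a i.1) = z
        then ∏ _i : Fin n, (1/2 : ℝ) else 0)
      = (∏ _i : {i // i ∈ Ω}, ∑ _b : Bool, (1/2 : ℝ))
        * ∏ i : {i // i ∈ Ωᶜ}, (1/2 : ℝ) :=
    sumA1 Ω (fun _ _ => (1/2 : ℝ)) z
  rw [h1]
  have h2 : (∏ _i : {i // i ∈ Ω}, ∑ _b : Bool, (1/2 : ℝ)) = 1 := by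
    refine Finset.prod_eq_one fun i _ => ?_
    rw [Fintype.sum_bool]
    norm_num
  rw [h2, one_mul]

lemma prob1 (x : {i // i ∈ Ω} → Bool) (z : {i // i ∈ Ωᶜ} → Bool) :
    prob' μ (fun s => ((fun i : {i // i ∈ Ω} => s.1 i.1),
        (fun i : {i // i ∈ Ωᶜ} => s.1 i.1))) (x, z)
      = (∏ _i : {i // i ∈ Ω}, (1/2 : ℝ)) * ∏ _i : {i // i ∈ Ωᶜ}, (1/2 : ℝ) := by
  classical
  have h0 : prob' μ (fun s => ((fun i : {i // i ∈ Ω} => s.1 i.1),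
        (fun i : {i // i ∈ Ωᶜ} => s.1 i.1))) (x, z)
      = ∑ a : Fin n → Bool, ∑ E : Fin n → Fin n → Bool,
        (if ((fun i : {i // i ∈ Ω} => a i.1), (fun i : {i // i ∈ Ωᶜ} => a i.1)) = (x, z)
          then μ (a, E) else 0) := by
    rw [prob', Finset.sum_filter]
    exact Fintype.sum_prod_type _
  rw [h0]
  have step : ∀ a : Fin n → Bool,
      (∑ E : Fin n → Fin n → Bool,
        (if ((fun i : {i // i ∈ Ω} => a i.1), (fun i : {i // i ∈ Ωᶜ} => a i.1)) = (x, z)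
          then μ (a, E) else 0))
      = (if (fun i : {i // i ∈ Ω} => a i.1) = x ∧ (fun i : {i // i ∈ Ωᶜ} => a i.1) = z
          then ∏ _i : Fin n, (1/2 : ℝ) else 0) := by
    intro a
    by_cases hxz : (fun i : {i // i ∈ Ω} => a i.1) = x
        ∧ (fun i : {i // i ∈ Ωᶜ} => a i.1) = z
    · have hp : ((fun i : {i // i ∈ Ω} => a i.1), (fun i : {i // i ∈ Ωᶜ} => a i.1))
          = (x, z) := by rw [hxz.1, hxz.2]
      rw [if_pos hxz, Finset.sum_congr rfl fun E _ => if_pos hp,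
        sum_mu ε μ hμ a, half_pow]
    · have hp : ((fun i : {i // i ∈ Ω} => a i.1), (fun i : {i // i ∈ Ωᶜ} => a i.1))
          ≠ (x, z) := by
        intro h
        exact hxz ⟨congrArg Prod.fst h, congrArg Prod.snd h⟩
      rw [if_neg hxz]
      exact Finset.sum_eq_zero fun E _ => if_neg hp
  rw [Finset.sum_congr rfl fun a _ => step a]
  exact sumA2 Ω (fun _ _ => (1/2 : ℝ)) x z

end

section
variable {n : ℕ} (ε : Fin n → Fin n → ℝ) (Ω : Finset (Fin n))
variable (μ : (Fin n → Bool) × (Fin n → Fin n → Bool) → ℝ)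
variable (hμ : ∀ s, μ s = (1 / 2 : ℝ) ^ n *
      ∏ i : Fin n, ∏ j : Fin n, (if s.2 i j then ε i j else 1 - ε i j))

include hμ

lemma prob4 (x : {i // i ∈ Ω} → Bool) (y : {j // j ∈ Ωᶜ} → {i // i ∈ Ω} → Option Bool)
    (z : {i // i ∈ Ωᶜ} → Bool) :
    prob' μ (fun s => (((fun i : {i // i ∈ Ω} => s.1 i.1),
        (fun (j : {j // j ∈ Ωᶜ}) (i : {i // i ∈ Ω}) =>
          if s.2 i.1 j.1 then (none : Option Bool) else some (s.1 i.1))),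
        (fun i : {i // i ∈ Ωᶜ} => s.1 i.1))) ((x, y), z)
      = (∏ i : {i // i ∈ Ω}, ((1/2 : ℝ) * Q ε Ω i.1 (x i) (fun j => y j i)))
        * ∏ _i : {i // i ∈ Ωᶜ}, (1/2 : ℝ) := by
  classical
  have h0 : prob' μ (fun s => (((fun i : {i // i ∈ Ω} => s.1 i.1),
        (fun (j : {j // j ∈ Ωᶜ}) (i : {i // i ∈ Ω}) =>
          if s.2 i.1 j.1 then (none : Option Bool) else some (s.1 i.1))),
        (fun i : {i // i ∈ Ωᶜ} => s.1 i.1))) ((x, y), z)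
      = ∑ a : Fin n → Bool, ∑ E : Fin n → Fin n → Bool,
        (if (((fun i : {i // i ∈ Ω} => a i.1),
            (fun (j : {j // j ∈ Ωᶜ}) (i : {i // i ∈ Ω}) =>
              if E i.1 j.1 then (none : Option Bool) else some (a i.1))),
            (fun i : {i // i ∈ Ωᶜ} => a i.1)) = ((x, y), z)
          then μ (a, E) else 0) := by
    rw [prob', Finset.sum_filter]
    exact Fintype.sum_prod_type _
  rw [h0]
  have step : ∀ a : Fin n → Bool,
      (∑ E : Fin n → Fin n → Bool,
        (if (((fun i : {i // i ∈ Ω} => a i.1),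
            (fun (j : {j // j ∈ Ωᶜ}) (i : {i // i ∈ Ω}) =>
              if E i.1 j.1 then (none : Option Bool) else some (a i.1))),
            (fun i : {i // i ∈ Ωᶜ} => a i.1)) = ((x, y), z)
          then μ (a, E) else 0))
      = (if (fun i : {i // i ∈ Ω} => a i.1) = x ∧ (fun i : {i // i ∈ Ωᶜ} => a i.1) = z
          then (1/2 : ℝ)^n * ∏ i : {i // i ∈ Ω}, Q ε Ω i.1 (a i.1) (fun j => y j i)
          else 0) := by
    intro a
    by_cases hxz : (fun i : {i // i ∈ Ω} => a i.1) = x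
        ∧ (fun i : {i // i ∈ Ωᶜ} => a i.1) = z
    · rw [if_pos hxz, ← sumE ε Ω a y, Finset.mul_sum]
      refine Finset.sum_congr rfl fun E _ => ?_
      by_cases hy : (fun (j : {j // j ∈ Ωᶜ}) (i : {i // i ∈ Ω}) =>
          if E i.1 j.1 then (none : Option Bool) else some (a i.1)) = y
      · have hp : (((fun i : {i // i ∈ Ω} => a i.1),
            (fun (j : {j // j ∈ Ωᶜ}) (i : {i // i ∈ Ω}) =>
              if E i.1 j.1 then (none : Option Bool) else some (a i.1))),
            (fun i : {i // i ∈ Ωᶜ} => a i.1)) = ((x, y), z) := by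
          rw [hxz.1, hxz.2, hy]
        rw [if_pos hp, if_pos hy]
        exact hμ (a, E)
      · have hp : ¬ ((((fun i : {i // i ∈ Ω} => a i.1),
            (fun (j : {j // j ∈ Ωᶜ}) (i : {i // i ∈ Ω}) =>
              if E i.1 j.1 then (none : Option Bool) else some (a i.1))),
            (fun i : {i // i ∈ Ωᶜ} => a i.1)) = ((x, y), z)) := by
          intro h
          exact hy (congrArg (fun p => p.1.2) h)
        rw [if_neg hp, if_neg hy, mul_zero]
    · rw [if_neg hxz]
      refine Finset.sum_eq_zero fun E _ => ?_
      have hp : ¬ ((((fun i : {i // i ∈ Ω} => a i.1),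
          (fun (j : {j // j ∈ Ωᶜ}) (i : {i // i ∈ Ω}) =>
            if E i.1 j.1 then (none : Option Bool) else some (a i.1))),
          (fun i : {i // i ∈ Ωᶜ} => a i.1)) = ((x, y), z)) := by
        intro h
        exact hxz ⟨congrArg (fun p => p.1.1) h, congrArg (fun p => p.2) h⟩
      exact if_neg hp
  rw [Finset.sum_congr rfl fun a _ => step a]
  set T : Fin n → Bool → ℝ := fun i b =>
    (1/2) * (if hi : i ∈ Ω then Q ε Ω i b (fun j => y j ⟨i, hi⟩) else 1) with hT
  have hprod : ∀ a : Fin n → Bool,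
      (1/2 : ℝ)^n * (∏ i : {i // i ∈ Ω}, Q ε Ω i.1 (a i.1) (fun j => y j i))
      = ∏ i : Fin n, T i (a i) := by
    intro a
    symm
    simp only [hT]
    rw [Finset.prod_mul_distrib,
      prod_dite_mem Ω (fun i hi => Q ε Ω i (a i) (fun j => y j ⟨i, hi⟩)), ← half_pow]
  have hstep2 : (∑ a : Fin n → Bool,
      (if (fun i : {i // i ∈ Ω} => a i.1) = x ∧ (fun i : {i // i ∈ Ωᶜ} => a i.1) = z
        then (1/2 : ℝ)^n * ∏ i : {i // i ∈ Ω}, Q ε Ω i.1 (a i.1) (fun j => y j i)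
        else 0))
      = ∑ a : Fin n → Bool,
        (if (fun i : {i // i ∈ Ω} => a i.1) = x ∧ (fun i : {i // i ∈ Ωᶜ} => a i.1) = z
          then ∏ i : Fin n, T i (a i) else 0) :=
    Finset.sum_congr rfl fun a _ => by rw [hprod a]
  rw [hstep2, sumA2 Ω T x z]
  congr 1
  · refine Finset.prod_congr rfl fun i _ => ?_
    simp only [hT]
    rw [dif_pos i.2]
  · refine Finset.prod_congr rfl fun i _ => ?_
    simp only [hT]
    rw [dif_neg (Finset.mem_compl.mp i.2), mul_one]

end

section
variable {n : ℕ} (ε : Fin n → Fin n → ℝ) (Ω : Finset (Fin n))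
variable (μ : (Fin n → Bool) × (Fin n → Fin n → Bool) → ℝ)
variable (hμ : ∀ s, μ s = (1 / 2 : ℝ) ^ n *
      ∏ i : Fin n, ∏ j : Fin n, (if s.2 i j then ε i j else 1 - ε i j))

include hμ

lemma prob2 (y : {j // j ∈ Ωᶜ} → {i // i ∈ Ω} → Option Bool)
    (z : {i // i ∈ Ωᶜ} → Bool) :
    prob' μ (fun s => ((fun (j : {j // j ∈ Ωᶜ}) (i : {i // i ∈ Ω}) =>
          if s.2 i.1 j.1 then (none : Option Bool) else some (s.1 i.1)),
        (fun i : {i // i ∈ Ωᶜ} => s.1 i.1))) (y, z)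
      = (∏ i : {i // i ∈ Ω}, R ε Ω i.1 (fun j => y j i))
        * ∏ _i : {i // i ∈ Ωᶜ}, (1/2 : ℝ) := by
  classical
  have h0 : prob' μ (fun s => ((fun (j : {j // j ∈ Ωᶜ}) (i : {i // i ∈ Ω}) =>
          if s.2 i.1 j.1 then (none : Option Bool) else some (s.1 i.1)),
        (fun i : {i // i ∈ Ωᶜ} => s.1 i.1))) (y, z)
      = ∑ a : Fin n → Bool, ∑ E : Fin n → Fin n → Bool,
        (if ((fun (j : {j // j ∈ Ωᶜ}) (i : {i // i ∈ Ω}) =>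
              if E i.1 j.1 then (none : Option Bool) else some (a i.1)),
            (fun i : {i // i ∈ Ωᶜ} => a i.1)) = (y, z)
          then μ (a, E) else 0) := by
    rw [prob', Finset.sum_filter]
    exact Fintype.sum_prod_type _
  rw [h0]
  have step : ∀ a : Fin n → Bool,
      (∑ E : Fin n → Fin n → Bool,
        (if ((fun (j : {j // j ∈ Ωᶜ}) (i : {i // i ∈ Ω}) =>
              if E i.1 j.1 then (none : Option Bool) else some (a i.1)),
            (fun i : {i // i ∈ Ωᶜ} => a i.1)) = (y, z)
          then μ (a, E) else 0))
      = (if (fun i : {i // i ∈ Ωᶜ} => a i.1) = z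
          then (1/2 : ℝ)^n * ∏ i : {i // i ∈ Ω}, Q ε Ω i.1 (a i.1) (fun j => y j i)
          else 0) := by
    intro a
    by_cases hz : (fun i : {i // i ∈ Ωᶜ} => a i.1) = z
    · rw [if_pos hz, ← sumE ε Ω a y, Finset.mul_sum]
      refine Finset.sum_congr rfl fun E _ => ?_
      by_cases hy : (fun (j : {j // j ∈ Ωᶜ}) (i : {i // i ∈ Ω}) =>
          if E i.1 j.1 then (none : Option Bool) else some (a i.1)) = y
      · have hp : ((fun (j : {j // j ∈ Ωᶜ}) (i : {i // i ∈ Ω}) =>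
              if E i.1 j.1 then (none : Option Bool) else some (a i.1)),
            (fun i : {i // i ∈ Ωᶜ} => a i.1)) = (y, z) := by
          rw [hz, hy]
        rw [if_pos hp, if_pos hy]
        exact hμ (a, E)
      · have hp : ¬ (((fun (j : {j // j ∈ Ωᶜ}) (i : {i // i ∈ Ω}) =>
              if E i.1 j.1 then (none : Option Bool) else some (a i.1)),
            (fun i : {i // i ∈ Ωᶜ} => a i.1)) = (y, z)) := by
          intro h
          exact hy (congrArg Prod.fst h)
        rw [if_neg hp, if_neg hy, mul_zero]
    · rw [if_neg hz]
      refine Finset.sum_eq_zero fun E _ => ?_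
      have hp : ¬ (((fun (j : {j // j ∈ Ωᶜ}) (i : {i // i ∈ Ω}) =>
            if E i.1 j.1 then (none : Option Bool) else some (a i.1)),
          (fun i : {i // i ∈ Ωᶜ} => a i.1)) = (y, z)) := by
        intro h
        exact hz (congrArg Prod.snd h)
      exact if_neg hp
  rw [Finset.sum_congr rfl fun a _ => step a]
  set T : Fin n → Bool → ℝ := fun i b =>
    (1/2) * (if hi : i ∈ Ω then Q ε Ω i b (fun j => y j ⟨i, hi⟩) else 1) with hT
  have hprod : ∀ a : Fin n → Bool,
      (1/2 : ℝ)^n * (∏ i : {i // i ∈ Ω}, Q ε Ω i.1 (a i.1) (fun j => y j i))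
      = ∏ i : Fin n, T i (a i) := by
    intro a
    symm
    simp only [hT]
    rw [Finset.prod_mul_distrib,
      prod_dite_mem Ω (fun i hi => Q ε Ω i (a i) (fun j => y j ⟨i, hi⟩)), ← half_pow]
  have hstep2 : (∑ a : Fin n → Bool,
      (if (fun i : {i // i ∈ Ωᶜ} => a i.1) = z
        then (1/2 : ℝ)^n * ∏ i : {i // i ∈ Ω}, Q ε Ω i.1 (a i.1) (fun j => y j i)
        else 0))
      = ∑ a : Fin n → Bool,
        (if (fun i : {i // i ∈ Ωᶜ} => a i.1) = z
          then ∏ i : Fin n, T i (a i) else 0) :=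
    Finset.sum_congr rfl fun a _ => by rw [hprod a]
  rw [hstep2, sumA1 Ω T z]
  congr 1
  · refine Finset.prod_congr rfl fun i _ => ?_
    rw [Fintype.sum_bool]
    simp only [hT]
    rw [dif_pos i.2, dif_pos i.2]
    unfold R
    ring
  · refine Finset.prod_congr rfl fun i _ => ?_
    simp only [hT]
    rw [dif_neg (Finset.mem_compl.mp i.2), mul_one]

end

/-! ### Entropies of the joint distributions -/

section
variable {n : ℕ} (ε : Fin n → Fin n → ℝ) (Ω : Finset (Fin n))

def e4equiv : (({i // i ∈ Ω} → Bool) × ({j // j ∈ Ωᶜ} → {i // i ∈ Ω} → Option Bool))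
    ≃ (∀ _i : {i // i ∈ Ω}, Bool × ({j // j ∈ Ωᶜ} → Option Bool)) where
  toFun v := fun i => (v.1 i, fun j => v.2 j i)
  invFun g := (fun i => (g i).1, fun j i => (g i).2 j)
  left_inv v := rfl
  right_inv g := rfl

def e2equiv : ({j // j ∈ Ωᶜ} → {i // i ∈ Ω} → Option Bool)
    ≃ ({i // i ∈ Ω} → {j // j ∈ Ωᶜ} → Option Bool) :=
  Equiv.piComm _

lemma entD_A4 : entD (fun v : ({i // i ∈ Ω} → Bool)
      × ({j // j ∈ Ωᶜ} → {i // i ∈ Ω} → Option Bool) =>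
      ∏ i : {i // i ∈ Ω}, ((1/2 : ℝ) * Q ε Ω i.1 (v.1 i) (fun j => v.2 j i)))
    = ∑ i : {i // i ∈ Ω}, (1 + ∑ j : {j // j ∈ Ωᶜ}, Hb ε i.1 j.1) := by
  have h1 := entD_pi (fun (i : {i // i ∈ Ω})
      (p : Bool × ({j // j ∈ Ωᶜ} → Option Bool)) => (1/2 : ℝ) * Q ε Ω i.1 p.1 p.2)
    (fun i => sum_P ε Ω i.1)
  have h2 := entD_equiv (e4equiv Ω)
    (fun g : ∀ _i : {i // i ∈ Ω}, Bool × ({j // j ∈ Ωᶜ} → Option Bool) =>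
      ∏ i, (1/2 : ℝ) * Q ε Ω i.1 (g i).1 (g i).2)
  exact (h2.trans h1).trans (Finset.sum_congr rfl fun i _ => entD_P ε Ω i.1)

lemma sum_A4 : ∑ v : ({i // i ∈ Ω} → Bool)
      × ({j // j ∈ Ωᶜ} → {i // i ∈ Ω} → Option Bool),
      ∏ i : {i // i ∈ Ω}, ((1/2 : ℝ) * Q ε Ω i.1 (v.1 i) (fun j => v.2 j i)) = 1 := by
  have h2 := Equiv.sum_comp (e4equiv Ω)
    (fun g : ∀ _i : {i // i ∈ Ω}, Bool × ({j // j ∈ Ωᶜ} → Option Bool) =>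
      ∏ i, (1/2 : ℝ) * Q ε Ω i.1 (g i).1 (g i).2)
  have h1 := sum_pi_eq (fun (i : {i // i ∈ Ω})
      (p : Bool × ({j // j ∈ Ωᶜ} → Option Bool)) => (1/2 : ℝ) * Q ε Ω i.1 p.1 p.2)
  exact (h2.trans h1).trans (Finset.prod_eq_one fun i _ => sum_P ε Ω i.1)

lemma entD_B : entD (fun y : {j // j ∈ Ωᶜ} → {i // i ∈ Ω} → Option Bool =>
      ∏ i : {i // i ∈ Ω}, R ε Ω i.1 (fun j => y j i))
    = ∑ i : {i // i ∈ Ω},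
        ((∑ j : {j // j ∈ Ωᶜ}, Hb ε i.1 j.1) + 1 - ∏ j : {j // j ∈ Ωᶜ}, ε i.1 j.1) := by
  have h1 := entD_pi (fun (i : {i // i ∈ Ω}) => R ε Ω i.1) (fun i => sum_R ε Ω i.1)
  have h2 := entD_equiv (e2equiv Ω)
    (fun g : {i // i ∈ Ω} → ({j // j ∈ Ωᶜ} → Option Bool) =>
      ∏ i, R ε Ω i.1 (g i))
  exact (h2.trans h1).trans (Finset.sum_congr rfl fun i _ => entD_R ε Ω i.1)

lemma sum_B : ∑ y : {j // j ∈ Ωᶜ} → {i // i ∈ Ω} → Option Bool,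
      ∏ i : {i // i ∈ Ω}, R ε Ω i.1 (fun j => y j i) = 1 := by
  have h2 := Equiv.sum_comp (e2equiv Ω)
    (fun g : {i // i ∈ Ω} → ({j // j ∈ Ωᶜ} → Option Bool) =>
      ∏ i, R ε Ω i.1 (g i))
  have h1 := sum_pi_eq (fun (i : {i // i ∈ Ω}) => R ε Ω i.1)
  exact (h2.trans h1).trans (Finset.prod_eq_one fun i _ => sum_R ε Ω i.1)

end

/-! ### Entropies of the four joint random variables -/

section
variable {n : ℕ} (ε : Fin n → Fin n → ℝ) (Ω : Finset (Fin n))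
variable (μ : (Fin n → Bool) × (Fin n → Fin n → Bool) → ℝ)
variable (hμ : ∀ s, μ s = (1 / 2 : ℝ) ^ n *
      ∏ i : Fin n, ∏ j : Fin n, (if s.2 i j then ε i j else 1 - ε i j))

include hμ

lemma ent3 : ent' μ (fun s => (fun i : {i // i ∈ Ωᶜ} => s.1 i.1)) = (Ωᶜ.card : ℝ) := by
  have hp : prob' μ (fun s => (fun i : {i // i ∈ Ωᶜ} => s.1 i.1))
      = fun _z : {i // i ∈ Ωᶜ} → Bool => ∏ _i : {i // i ∈ Ωᶜ}, (1/2 : ℝ) :=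
    funext fun z => prob3 ε Ω μ hμ z
  show entD (prob' μ (fun s => (fun i : {i // i ∈ Ωᶜ} => s.1 i.1))) = _
  rw [hp]
  exact entD_unif.trans (by rw [Fintype.card_coe])

lemma ent1 : ent' μ (fun s => ((fun i : {i // i ∈ Ω} => s.1 i.1),
      (fun i : {i // i ∈ Ωᶜ} => s.1 i.1)))
    = (Ω.card : ℝ) + (Ωᶜ.card : ℝ) := by
  have hp : prob' μ (fun s => ((fun i : {i // i ∈ Ω} => s.1 i.1),
        (fun i : {i // i ∈ Ωᶜ} => s.1 i.1)))
      = fun _v : ({i // i ∈ Ω} → Bool) × ({i // i ∈ Ωᶜ} → Bool) =>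
        (∏ _i : {i // i ∈ Ω}, (1/2 : ℝ)) * ∏ _i : {i // i ∈ Ωᶜ}, (1/2 : ℝ) :=
    funext fun v => prob1 ε Ω μ hμ v.1 v.2
  show entD (prob' μ (fun s => ((fun i : {i // i ∈ Ω} => s.1 i.1),
      (fun i : {i // i ∈ Ωᶜ} => s.1 i.1)))) = _
  rw [hp]
  have h2 := entD_prod (fun _ : {i // i ∈ Ω} → Bool => ∏ _i : {i // i ∈ Ω}, (1/2 : ℝ))
    (fun _ : {i // i ∈ Ωᶜ} → Bool => ∏ _i : {i // i ∈ Ωᶜ}, (1/2 : ℝ))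
  refine h2.trans ?_
  beta_reduce
  rw [show (∑ _b : {i // i ∈ Ωᶜ} → Bool, ∏ _i : {i // i ∈ Ωᶜ}, (1/2 : ℝ)) = 1
      from sum_unif,
    show (∑ _a : {i // i ∈ Ω} → Bool, ∏ _i : {i // i ∈ Ω}, (1/2 : ℝ)) = 1
      from sum_unif,
    show entD (fun _ : {i // i ∈ Ω} → Bool => ∏ _i : {i // i ∈ Ω}, (1/2 : ℝ))
      = (Fintype.card {i // i ∈ Ω} : ℝ) from entD_unif,
    show entD (fun _ : {i // i ∈ Ωᶜ} → Bool => ∏ _i : {i // i ∈ Ωᶜ}, (1/2 : ℝ))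
      = (Fintype.card {i // i ∈ Ωᶜ} : ℝ) from entD_unif,
    Fintype.card_coe, Fintype.card_coe, one_mul, one_mul]

lemma ent2 : ent' μ (fun s => ((fun (j : {j // j ∈ Ωᶜ}) (i : {i // i ∈ Ω}) =>
        if s.2 i.1 j.1 then (none : Option Bool) else some (s.1 i.1)),
      (fun i : {i // i ∈ Ωᶜ} => s.1 i.1)))
    = (∑ i : {i // i ∈ Ω},
        ((∑ j : {j // j ∈ Ωᶜ}, Hb ε i.1 j.1) + 1 - ∏ j : {j // j ∈ Ωᶜ}, ε i.1 j.1))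
      + (Ωᶜ.card : ℝ) := by
  have hp : prob' μ (fun s => ((fun (j : {j // j ∈ Ωᶜ}) (i : {i // i ∈ Ω}) =>
        if s.2 i.1 j.1 then (none : Option Bool) else some (s.1 i.1)),
      (fun i : {i // i ∈ Ωᶜ} => s.1 i.1)))
      = fun v : ({j // j ∈ Ωᶜ} → {i // i ∈ Ω} → Option Bool) × ({i // i ∈ Ωᶜ} → Bool) =>
        (∏ i : {i // i ∈ Ω}, R ε Ω i.1 (fun j => v.1 j i))
          * ∏ _i : {i // i ∈ Ωᶜ}, (1/2 : ℝ) :=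
    funext fun v => prob2 ε Ω μ hμ v.1 v.2
  show entD (prob' μ (fun s => ((fun (j : {j // j ∈ Ωᶜ}) (i : {i // i ∈ Ω}) =>
        if s.2 i.1 j.1 then (none : Option Bool) else some (s.1 i.1)),
      (fun i : {i // i ∈ Ωᶜ} => s.1 i.1)))) = _
  rw [hp]
  have h2 := entD_prod
    (fun yv : {j // j ∈ Ωᶜ} → {i // i ∈ Ω} → Option Bool =>
      ∏ i : {i // i ∈ Ω}, R ε Ω i.1 (fun j => yv j i))
    (fun _ : {i // i ∈ Ωᶜ} → Bool => ∏ _i : {i // i ∈ Ωᶜ}, (1/2 : ℝ))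
  refine h2.trans ?_
  beta_reduce
  rw [show (∑ _b : {i // i ∈ Ωᶜ} → Bool, ∏ _i : {i // i ∈ Ωᶜ}, (1/2 : ℝ)) = 1
      from sum_unif,
    sum_B ε Ω, entD_B ε Ω,
    show entD (fun _ : {i // i ∈ Ωᶜ} → Bool => ∏ _i : {i // i ∈ Ωᶜ}, (1/2 : ℝ))
      = (Fintype.card {i // i ∈ Ωᶜ} : ℝ) from entD_unif,
    Fintype.card_coe, one_mul, one_mul]

lemma ent4 : ent' μ (fun s => (((fun i : {i // i ∈ Ω} => s.1 i.1),
      (fun (j : {j // j ∈ Ωᶜ}) (i : {i // i ∈ Ω}) =>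
        if s.2 i.1 j.1 then (none : Option Bool) else some (s.1 i.1))),
      (fun i : {i // i ∈ Ωᶜ} => s.1 i.1)))
    = (∑ i : {i // i ∈ Ω}, (1 + ∑ j : {j // j ∈ Ωᶜ}, Hb ε i.1 j.1))
      + (Ωᶜ.card : ℝ) := by
  have hp : prob' μ (fun s => (((fun i : {i // i ∈ Ω} => s.1 i.1),
      (fun (j : {j // j ∈ Ωᶜ}) (i : {i // i ∈ Ω}) =>
        if s.2 i.1 j.1 then (none : Option Bool) else some (s.1 i.1))),
      (fun i : {i // i ∈ Ωᶜ} => s.1 i.1)))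
      = fun v : (({i // i ∈ Ω} → Bool) × ({j // j ∈ Ωᶜ} → {i // i ∈ Ω} → Option Bool))
          × ({i // i ∈ Ωᶜ} → Bool) =>
        (∏ i : {i // i ∈ Ω}, ((1/2 : ℝ) * Q ε Ω i.1 (v.1.1 i) (fun j => v.1.2 j i)))
          * ∏ _i : {i // i ∈ Ωᶜ}, (1/2 : ℝ) :=
    funext fun v => prob4 ε Ω μ hμ v.1.1 v.1.2 v.2
  show entD (prob' μ (fun s => (((fun i : {i // i ∈ Ω} => s.1 i.1),
      (fun (j : {j // j ∈ Ωᶜ}) (i : {i // i ∈ Ω}) =>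
        if s.2 i.1 j.1 then (none : Option Bool) else some (s.1 i.1))),
      (fun i : {i // i ∈ Ωᶜ} => s.1 i.1)))) = _
  rw [hp]
  have h2 := entD_prod
    (fun w : ({i // i ∈ Ω} → Bool) × ({j // j ∈ Ωᶜ} → {i // i ∈ Ω} → Option Bool) =>
      ∏ i : {i // i ∈ Ω}, ((1/2 : ℝ) * Q ε Ω i.1 (w.1 i) (fun j => w.2 j i)))
    (fun _ : {i // i ∈ Ωᶜ} → Bool => ∏ _i : {i // i ∈ Ωᶜ}, (1/2 : ℝ))
  refine h2.trans ?_
  beta_reduce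
  rw [show (∑ _b : {i // i ∈ Ωᶜ} → Bool, ∏ _i : {i // i ∈ Ωᶜ}, (1/2 : ℝ)) = 1
      from sum_unif,
    sum_A4 ε Ω, entD_A4 ε Ω,
    show entD (fun _ : {i // i ∈ Ωᶜ} → Bool => ∏ _i : {i // i ∈ Ωᶜ}, (1/2 : ℝ))
      = (Fintype.card {i // i ∈ Ωᶜ} : ℝ) from entD_unif,
    Fintype.card_coe, one_mul, one_mul]

end

/-- Wireless erasure network: the sample space consists of i.i.d. `Bernoulli(1/2)`
transmitted bits `s.1 i` and independent erasure indicators `s.2 i j` (erasure of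
the link `i → j` with probability `ε i j`).  For a cut `Ω`, node `j ∈ Ωᶜ` receives
from each `i ∈ Ω` either `X_i` or an erasure (`none`).  Then
`I(X_Ω ; Y_{Ωᶜ} | X_{Ωᶜ}) = Σ_{i∈Ω} (1 − Π_{j∈Ωᶜ} ε_{ij})`. -/
theorem stmt_11 {n : ℕ} (ε : Fin n → Fin n → ℝ)
    (hε : ∀ i j, 0 ≤ ε i j ∧ ε i j ≤ 1)
    (μ : (Fin n → Bool) × (Fin n → Fin n → Bool) → ℝ)
    (hμ : ∀ s, μ s = (1 / 2 : ℝ) ^ n *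
      ∏ i : Fin n, ∏ j : Fin n, (if s.2 i j then ε i j else 1 - ε i j))
    (Ω : Finset (Fin n)) :
    condMI' μ
      (fun s (i : {i // i ∈ Ω}) => s.1 i)
      (fun s (j : {j // j ∈ Ωᶜ}) (i : {i // i ∈ Ω}) =>
        if s.2 i j then (none : Option Bool) else some (s.1 i))
      (fun s (i : {i // i ∈ Ωᶜ}) => s.1 i)
      = ∑ i ∈ Ω, (1 - ∏ j ∈ Ωᶜ, ε i j) := by
  classical
  unfold condMI' condEnt'
  beta_reduce
  rw [ent1 ε Ω μ hμ, ent2 ε Ω μ hμ, ent3 ε Ω μ hμ, ent4 ε Ω μ hμ]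
  have hBA : (∑ i : {i // i ∈ Ω},
      ((∑ j : {j // j ∈ Ωᶜ}, Hb ε i.1 j.1) + 1 - ∏ j : {j // j ∈ Ωᶜ}, ε i.1 j.1))
      = (∑ i : {i // i ∈ Ω}, (1 + ∑ j : {j // j ∈ Ωᶜ}, Hb ε i.1 j.1))
        - ∑ i : {i // i ∈ Ω}, ∏ j : {j // j ∈ Ωᶜ}, ε i.1 j.1 := by
    rw [← Finset.sum_sub_distrib]
    exact Finset.sum_congr rfl fun i _ => by ring
  have hP : (∑ i : {i // i ∈ Ω}, ∏ j : {j // j ∈ Ωᶜ}, ε i.1 j.1)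
      = ∑ i ∈ Ω, ∏ j ∈ Ωᶜ, ε i j := by
    rw [← Finset.sum_coe_sort Ω (fun i => ∏ j ∈ Ωᶜ, ε i j)]
    exact Finset.sum_congr rfl fun i _ => Finset.prod_coe_sort Ωᶜ (fun j => ε i.1 j)
  have hT : (∑ i ∈ Ω, ((1 : ℝ) - ∏ j ∈ Ωᶜ, ε i j))
      = (Ω.card : ℝ) - ∑ i ∈ Ω, ∏ j ∈ Ωᶜ, ε i j := by
    rw [Finset.sum_sub_distrib, Finset.sum_const, nsmul_eq_mul, mul_one]
  rw [hBA, hP, hT]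
  ring
end

section
/- If f : 2^V → ℝ is submodular with f(∅) = 0, then the minimum of its Lovász extension g over the hypercube [0,1]^n equals the minimum of f over subsets of V: min_{x ∈ [0,1]^n} g(x) = min_{A ⊆ V} f(A). -/
private lemma exists_sorting {n : ℕ} (x : Fin n → ℝ) :
    ∃ σ : Equiv.Perm (Fin n), ∀ i j : Fin n, i ≤ j → x (σ j) ≤ x (σ i) := by
  refine ⟨Tuple.sort (fun i => -x i), fun i j hij => ?_⟩
  have := Tuple.monotone_sort (fun i => -x i) hij
  simpa using this

private lemma downset_mem {n : ℕ} (T : Finset (Fin n))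
    (hT : ∀ i j : Fin n, i ≤ j → j ∈ T → i ∈ T) (j : Fin n) :
    j ∈ T ↔ (j : ℕ) < T.card := by
  constructor
  · intro hj
    have hsub : Finset.Iic j ⊆ T := fun i hi => hT i j (Finset.mem_Iic.mp hi) hj
    have := Finset.card_le_card hsub
    rw [Fin.card_Iic] at this
    omega
  · intro hj
    by_contra hjT
    have hsub : T ⊆ Finset.Iio j := by
      intro t ht
      rw [Finset.mem_Iio]
      by_contra hlt
      exact hjT (hT j t (le_of_not_gt hlt) ht)
    have := Finset.card_le_card hsub
    rw [Fin.card_Iio] at this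
    omega

/-- For a submodular `f` with `f(∅)=0`, the minimum of its Lovász extension `g`
over the hypercube `[0,1]^n` equals the minimum of `f` over all subsets. -/
theorem stmt_16 {n : ℕ} (f : Finset (Fin n) → ℝ) (hf : f ∅ = 0)
    (hsub : ∀ A B : Finset (Fin n), f (A ∪ B) + f (A ∩ B) ≤ f A + f B)
    (g : (Fin n → ℝ) → ℝ)
    (hg : ∀ (x : Fin n → ℝ) (σ : Equiv.Perm (Fin n)),
      (∀ i j : Fin n, i ≤ j → x (σ j) ≤ x (σ i)) →
      g x = ∑ i : Fin n,
        (x (σ i) - if h : (i : ℕ) + 1 < n then x (σ ⟨(i : ℕ) + 1, h⟩) else 0) *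
          f ((Finset.Iic i).image σ)) :
    (⨅ x : {x : Fin n → ℝ // ∀ i, 0 ≤ x i ∧ x i ≤ 1}, g x)
      = ⨅ A : Finset (Fin n), f A := by
  classical
  have hbdd : BddBelow (Set.range f) := (Set.finite_range f).bddBelow
  set m := ⨅ A : Finset (Fin n), f A with hm
  have hmle : ∀ A, m ≤ f A := fun A => ciInf_le hbdd A
  have hm0 : m ≤ 0 := by simpa [hf] using hmle ∅
  haveI : Nonempty {x : Fin n → ℝ // ∀ i, 0 ≤ x i ∧ x i ≤ 1} :=
    ⟨⟨fun _ => 0, fun i => ⟨le_refl 0, zero_le_one⟩⟩⟩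
  -- lower bound: m ≤ g x for all x in the cube
  have key : ∀ x : {x : Fin n → ℝ // ∀ i, 0 ≤ x i ∧ x i ≤ 1}, m ≤ g x.val := by
    rintro ⟨x, hx⟩
    obtain ⟨σ, hσ⟩ := exists_sorting x
    rw [hg x σ hσ]
    set Y : ℕ → ℝ := fun i => if h : i < n then x (σ ⟨i, h⟩) else 0 with hYdef
    have hYi : ∀ i : Fin n, Y (i : ℕ) = x (σ i) := by
      intro i; simp [hYdef, i.isLt]
    have hstep : ∀ i : Fin n,
        (Y (i : ℕ) - Y ((i : ℕ) + 1)) * m ≤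
        (x (σ i) - if h : (i : ℕ) + 1 < n then x (σ ⟨(i : ℕ) + 1, h⟩) else 0) *
          f ((Finset.Iic i).image σ) := by
      intro i
      have hcoef : (x (σ i) - if h : (i : ℕ) + 1 < n then x (σ ⟨(i : ℕ) + 1, h⟩) else 0)
          = Y (i : ℕ) - Y ((i : ℕ) + 1) := by
        rw [hYi i]
      rw [hcoef]
      have hY1 : Y ((i : ℕ) + 1)
          = if h : (i : ℕ) + 1 < n then x (σ ⟨(i : ℕ) + 1, h⟩) else 0 := rfl
      have hnonneg : 0 ≤ Y (i : ℕ) - Y ((i : ℕ) + 1) := by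
        rw [hYi i, hY1]
        by_cases h : (i : ℕ) + 1 < n
        · have h2 := hσ i ⟨(i : ℕ) + 1, h⟩ (by simp [Fin.le_def])
          rw [dif_pos h]
          linarith
        · have h2 := (hx (σ i)).1
          rw [dif_neg h]
          linarith
      exact mul_le_mul_of_nonneg_left (hmle _) hnonneg
    have hsum1 : ∑ i : Fin n, (Y (i : ℕ) - Y ((i : ℕ) + 1)) = Y 0 - Y n := by
      rw [Fin.sum_univ_eq_sum_range (fun j => Y j - Y (j + 1)) n]
      exact Finset.sum_range_sub' Y n
    have hYn : Y n = 0 := by simp [hYdef]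
    have hY0le : Y 0 ≤ 1 := by
      by_cases h : 0 < n
      · rw [show (0 : ℕ) = ((⟨0, h⟩ : Fin n) : ℕ) from rfl, hYi]
        exact (hx _).2
      · simp [hYdef, h]
    have hchain : m ≤ Y 0 * m := by nlinarith
    calc m ≤ Y 0 * m := hchain
      _ = (∑ i : Fin n, (Y (i : ℕ) - Y ((i : ℕ) + 1))) * m := by rw [hsum1, hYn]; ring
      _ = ∑ i : Fin n, (Y (i : ℕ) - Y ((i : ℕ) + 1)) * m := Finset.sum_mul _ _ _
      _ ≤ _ := Finset.sum_le_sum (fun i _ => hstep i)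
  -- the minimizer of f
  obtain ⟨A₀, hA₀⟩ := Finite.exists_min f
  have hmA₀ : f A₀ = m := le_antisymm (le_ciInf hA₀) (hmle A₀)
  -- indicator vector of A₀
  set x₀ : Fin n → ℝ := fun i => if i ∈ A₀ then 1 else 0 with hx₀def
  have hx₀ : ∀ i, 0 ≤ x₀ i ∧ x₀ i ≤ 1 := by
    intro i; by_cases h : i ∈ A₀ <;> simp [hx₀def, h]
  have hgx₀ : g x₀ = f A₀ := by
    obtain ⟨σ, hσ⟩ := exists_sorting x₀
    rw [hg x₀ σ hσ]
    set k := A₀.card with hk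
    have hkn : k ≤ n := by
      have := Finset.card_le_univ A₀
      simpa using this
    set T : Finset (Fin n) := A₀.image σ.symm with hT
    have hTmem : ∀ j, j ∈ T ↔ σ j ∈ A₀ := by
      intro j
      simp only [hT, Finset.mem_image]
      constructor
      · rintro ⟨a, ha, rfl⟩; simpa using ha
      · intro h; exact ⟨σ j, h, Equiv.symm_apply_apply σ _⟩
    have hTcard : T.card = k := Finset.card_image_of_injective _ σ.symm.injective
    have hdown : ∀ i j : Fin n, i ≤ j → j ∈ T → i ∈ T := by
      intro i j hij hj
      rw [hTmem] at hj ⊢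
      by_contra hi
      have h1 : x₀ (σ j) = 1 := if_pos hj
      have h0 : x₀ (σ i) = 0 := if_neg hi
      have := hσ i j hij
      rw [h1, h0] at this; linarith
    have hchar : ∀ j : Fin n, σ j ∈ A₀ ↔ (j : ℕ) < k := by
      intro j
      rw [← hTmem, downset_mem T hdown, hTcard]
    have hxσ : ∀ i : Fin n, x₀ (σ i) = if (i : ℕ) < k then 1 else 0 := by
      intro i
      simp only [hx₀def, hchar i]
    by_cases hk0 : k = 0
    · have hA₀e : A₀ = ∅ := Finset.card_eq_zero.mp hk0
      have : ∀ i : Fin n,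
          (x₀ (σ i) - if h : (i : ℕ) + 1 < n then x₀ (σ ⟨(i : ℕ) + 1, h⟩) else 0) *
            f ((Finset.Iic i).image σ) = 0 := by
        intro i
        have h1 : x₀ (σ i) = 0 := by rw [hxσ]; simp [hk0]
        have h2 : (if h : (i : ℕ) + 1 < n then x₀ (σ ⟨(i : ℕ) + 1, h⟩) else 0) = 0 := by
          by_cases h : (i : ℕ) + 1 < n
          · rw [dif_pos h, hxσ]; simp [hk0]
          · rw [dif_neg h]
        rw [h1, h2]; ring
      rw [Finset.sum_congr rfl (fun i _ => this i), Finset.sum_const, smul_zero, hA₀e, hf]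
    · -- k ≥ 1
      have hk1 : 1 ≤ k := Nat.one_le_iff_ne_zero.mpr hk0
      have hi₀lt : k - 1 < n := by omega
      set i₀ : Fin n := ⟨k - 1, hi₀lt⟩ with hi₀
      have hS : (Finset.Iic i₀).image σ = A₀ := by
        apply Finset.eq_of_subset_of_card_le
        · intro a ha
          obtain ⟨j, hj, rfl⟩ := Finset.mem_image.mp ha
          rw [hchar]
          have := Finset.mem_Iic.mp hj
          have : (j : ℕ) ≤ k - 1 := this
          omega
        · rw [Finset.card_image_of_injective _ σ.injective, Fin.card_Iic]
          simp [hi₀]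
          omega
      rw [Finset.sum_eq_single i₀]
      · have h1 : x₀ (σ i₀) = 1 := by rw [hxσ]; simp [hi₀]; omega
        have h2 : (if h : (i₀ : ℕ) + 1 < n then x₀ (σ ⟨(i₀ : ℕ) + 1, h⟩) else 0) = 0 := by
          by_cases h : (i₀ : ℕ) + 1 < n
          · rw [dif_pos h, hxσ]
            simp only [hi₀]
            have : ¬ (k - 1 + 1 < k) := by omega
            simp [this]
          · rw [dif_neg h]
        rw [h1, h2, hS]; ring
      · intro i _ hne
        have hine : (i : ℕ) ≠ k - 1 := by
          intro h
          exact hne (Fin.ext h)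
        have hcoef : (x₀ (σ i) - if h : (i : ℕ) + 1 < n then x₀ (σ ⟨(i : ℕ) + 1, h⟩) else 0) = 0 := by
          by_cases hi : (i : ℕ) < k
          · by_cases h : (i : ℕ) + 1 < n
            · rw [dif_pos h, hxσ, hxσ]
              have h3 : (i : ℕ) + 1 < k := by omega
              simp [hi, h3]
            · exfalso
              have := i.isLt
              omega
          · rw [hxσ]
            have h4 : (if h : (i : ℕ) + 1 < n then x₀ (σ ⟨(i : ℕ) + 1, h⟩) else 0) = 0 := by
              by_cases h : (i : ℕ) + 1 < n
              · rw [dif_pos h, hxσ]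
                have : ¬ ((i : ℕ) + 1 < k) := by omega
                simp [this]
              · rw [dif_neg h]
            rw [h4]
            simp [hi]
        rw [hcoef]; ring
      · intro h
        exact absurd (Finset.mem_univ i₀) h
  -- finish
  refine le_antisymm ?_ (le_ciInf key)
  have hbdd2 : BddBelow (Set.range fun x : {x : Fin n → ℝ // ∀ i, 0 ≤ x i ∧ x i ≤ 1} => g x.val) := by
    refine ⟨m, ?_⟩
    rintro _ ⟨x, rfl⟩
    exact key x
  calc (⨅ x : {x : Fin n → ℝ // ∀ i, 0 ≤ x i ∧ x i ≤ 1}, g x.val)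
      ≤ g (⟨x₀, hx₀⟩ : {x : Fin n → ℝ // ∀ i, 0 ≤ x i ∧ x i ≤ 1}).val := ciInf_le hbdd2 _
    _ = f A₀ := hgx₀
    _ = m := hmA₀
end

section
/- If f : 2^V → ℝ is submodular with f(∅) = 0, then its Lovász extension g : [0,1]^n → ℝ is a convex function. -/
open Finset

namespace Stmt17Aux

variable {n : ℕ}

/-- successive coordinate difference -/
noncomputable def lam (x : Fin n → ℝ) (σ : Equiv.Perm (Fin n)) (i : Fin n) : ℝ :=
  x (σ i) - if h : (i : ℕ) + 1 < n then x (σ ⟨(i : ℕ) + 1, h⟩) else 0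

/-- greedy weight vector associated to permutation σ -/
noncomputable def wt (f : Finset (Fin n) → ℝ) (σ : Equiv.Perm (Fin n)) (e : Fin n) : ℝ :=
  f ((Finset.Iic (σ.symm e)).image σ) - f ((Finset.Iio (σ.symm e)).image σ)

lemma sum_wt_image (f : Finset (Fin n) → ℝ) (σ : Equiv.Perm (Fin n)) (B : Finset (Fin n)) :
    ∑ e ∈ B.image σ, wt f σ e
      = ∑ k ∈ B, (f ((Iic k).image σ) - f ((Iio k).image σ)) := by
  rw [Finset.sum_image (fun a _ b _ h => σ.injective h)]
  simp [wt]

lemma sum_wt_Iic (f : Finset (Fin n) → ℝ) (hf : f ∅ = 0) (σ : Equiv.Perm (Fin n)) (i : Fin n) :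
    ∑ e ∈ (Iic i).image σ, wt f σ e = f ((Iic i).image σ) := by
  rw [sum_wt_image]
  suffices h : ∀ m (h : m < n),
      ∑ k ∈ Iic (⟨m, h⟩ : Fin n), (f ((Iic k).image σ) - f ((Iio k).image σ))
        = f ((Iic (⟨m, h⟩ : Fin n)).image σ) by
    have := h i.1 i.2
    simpa using this
  intro m
  induction m with
  | zero =>
    intro h
    have h1 : (Iic (⟨0, h⟩ : Fin n)) = {(⟨0, h⟩ : Fin n)} := by
      ext k; simp only [mem_Iic, mem_singleton, Fin.le_def, Fin.ext_iff]; omega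
    have h2 : (Iio (⟨0, h⟩ : Fin n)) = ∅ := by
      ext k; simp only [mem_Iio, notMem_empty, iff_false, Fin.lt_def]; omega
    rw [h1, Finset.sum_singleton, h1, h2]
    simp [hf]
  | succ m ih =>
    intro h
    have hm : m < n := Nat.lt_of_succ_lt h
    have h1 : Iic (⟨m + 1, h⟩ : Fin n) = insert (⟨m + 1, h⟩ : Fin n) (Iic (⟨m, hm⟩ : Fin n)) := by
      ext k; simp only [mem_Iic, mem_insert, Fin.le_def, Fin.ext_iff]; omega
    have h2 : Iio (⟨m + 1, h⟩ : Fin n) = Iic (⟨m, hm⟩ : Fin n) := by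
      ext k; simp only [mem_Iio, mem_Iic, Fin.le_def, Fin.lt_def]; omega
    have hnot : (⟨m + 1, h⟩ : Fin n) ∉ Iic (⟨m, hm⟩ : Fin n) := by
      simp only [mem_Iic, Fin.le_def, not_le]; omega
    rw [h1, Finset.sum_insert hnot, ih hm, h2, ← h1]
    ring

lemma greedy (f : Finset (Fin n) → ℝ) (hf : f ∅ = 0)
    (hsub : ∀ A B : Finset (Fin n), f (A ∪ B) + f (A ∩ B) ≤ f A + f B)
    (σ : Equiv.Perm (Fin n)) (A : Finset (Fin n)) :
    ∑ e ∈ A, wt f σ e ≤ f A := by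
  induction A using Finset.strongInduction with
  | _ A ih =>
    rcases A.eq_empty_or_nonempty with rfl | hA
    · simp [hf]
    · have hB : (A.image σ.symm).Nonempty := hA.image _
      set k := (A.image σ.symm).max' hB with hk
      have hkmem : k ∈ A.image σ.symm := Finset.max'_mem _ hB
      obtain ⟨a, haA, hak⟩ := Finset.mem_image.mp hkmem
      have he0 : σ k ∈ A := by rw [← hak]; simpa using haA
      set e0 := σ k with he0def
      have hsubset : A.erase e0 ⊆ (Iio k).image σ := by
        intro e he
        obtain ⟨hne, heA⟩ := Finset.mem_erase.mp he
        have h1 : σ.symm e ∈ A.image σ.symm := Finset.mem_image_of_mem _ heA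
        have h2 : σ.symm e ≤ k := Finset.le_max' _ _ h1
        have h3 : σ.symm e ≠ k := by
          intro hc
          apply hne
          rw [he0def, ← hc]; simp
        exact Finset.mem_image.mpr ⟨σ.symm e, Finset.mem_Iio.mpr (lt_of_le_of_ne h2 h3), by simp⟩
      have hUnion : A ∪ (Iio k).image σ = (Iic k).image σ := by
        ext e
        simp only [Finset.mem_union, Finset.mem_image]
        constructor
        · rintro (heA | ⟨j, hj, rfl⟩)
          · by_cases hce : e = e0
            · exact ⟨k, by simp, by rw [hce]⟩
            · obtain ⟨j, hj, hje⟩ := Finset.mem_image.mp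
                (hsubset (Finset.mem_erase.mpr ⟨hce, heA⟩))
              exact ⟨j, Finset.mem_Iic.mpr (le_of_lt (Finset.mem_Iio.mp hj)), hje⟩
          · exact ⟨j, Finset.mem_Iic.mpr (le_of_lt (Finset.mem_Iio.mp hj)), rfl⟩
        · rintro ⟨j, hj, rfl⟩
          rcases eq_or_lt_of_le (Finset.mem_Iic.mp hj) with rfl | hlt
          · exact Or.inl he0
          · exact Or.inr ⟨j, Finset.mem_Iio.mpr hlt, rfl⟩
      have hInter : A ∩ (Iio k).image σ = A.erase e0 := by
        ext e
        constructor
        · intro he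
          obtain ⟨heA, heI⟩ := Finset.mem_inter.mp he
          obtain ⟨j, hj, rfl⟩ := Finset.mem_image.mp heI
          refine Finset.mem_erase.mpr ⟨?_, heA⟩
          intro hc
          have : j = k := σ.injective hc
          exact absurd (Finset.mem_Iio.mp hj) (by rw [this]; exact lt_irrefl k)
        · intro he
          exact Finset.mem_inter.mpr ⟨Finset.mem_of_mem_erase he, hsubset he⟩
      have key := hsub A ((Iio k).image σ)
      rw [hUnion, hInter] at key
      have hss : A.erase e0 ⊂ A := Finset.erase_ssubset he0
      have ihe := ih _ hss
      have hsplit : ∑ e ∈ A, wt f σ e = ∑ e ∈ A.erase e0, wt f σ e + wt f σ e0 :=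
        (Finset.sum_erase_add A _ he0).symm
      have hwt : wt f σ e0 = f ((Iic k).image σ) - f ((Iio k).image σ) := by
        simp [wt, he0def]
      rw [hsplit, hwt]
      linarith

lemma sum_lam_Ici (x : Fin n → ℝ) (σ : Equiv.Perm (Fin n)) (k : Fin n) :
    ∑ i ∈ Ici k, lam x σ i = x (σ k) := by
  set Y : ℕ → ℝ := fun m => if h : m < n then x (σ ⟨m, h⟩) else 0 with hY
  have hlam : ∀ i : Fin n, lam x σ i = Y i.1 - Y (i.1 + 1) := by
    intro i
    simp only [lam, hY, i.isLt, dif_pos, Fin.eta]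
  rw [Finset.sum_congr rfl (fun i _ => hlam i)]
  have hmap : ∑ i ∈ Ici k, (Y i.1 - Y (i.1 + 1)) = ∑ m ∈ Finset.Ico (k : ℕ) n, (Y m - Y (m + 1)) := by
    refine Finset.sum_nbij' (t := Finset.Ico (k : ℕ) n) (g := fun m => Y m - Y (m + 1))
      (fun i => (i : ℕ)) (fun m => if h : m < n then (⟨m, h⟩ : Fin n) else k) ?_ ?_ ?_ ?_ ?_
    · intro i hi
      simp only [Finset.mem_Ico]
      exact ⟨Fin.le_def.mp (Finset.mem_Ici.mp hi), i.isLt⟩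
    · intro m hm
      obtain ⟨h1, h2⟩ := Finset.mem_Ico.mp hm
      simp only [h2, dif_pos]
      exact Finset.mem_Ici.mpr (Fin.le_def.mpr h1)
    · intro i _
      simp [i.isLt]
    · intro m hm
      obtain ⟨_, h2⟩ := Finset.mem_Ico.mp hm
      simp [h2]
    · intro i _
      rfl
  rw [hmap, Finset.sum_Ico_eq_sum_range]
  have htel : ∑ m ∈ Finset.range (n - k), (Y ((k : ℕ) + m) - Y ((k : ℕ) + m + 1))
      = Y (k : ℕ) - Y ((k : ℕ) + (n - (k : ℕ))) := by
    have := Finset.sum_range_sub' (fun m => Y ((k : ℕ) + m)) (n - (k : ℕ))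
    simpa [add_assoc] using this
  rw [htel]
  have h1 : (k : ℕ) + (n - (k : ℕ)) = n := by omega
  have h2 : Y n = 0 := by simp [hY]
  have h3 : Y (k : ℕ) = x (σ k) := by simp [hY, k.isLt]
  rw [h1, h2, h3, sub_zero]

lemma abel (v x : Fin n → ℝ) (σ : Equiv.Perm (Fin n)) :
    ∑ i : Fin n, lam x σ i * (∑ e ∈ (Iic i).image σ, v e) = ∑ e : Fin n, v e * x e := by
  have h1 : ∀ i : Fin n, ∑ e ∈ (Iic i).image σ, v e = ∑ k ∈ Iic i, v (σ k) := fun i =>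
    Finset.sum_image (fun a _ b _ h => σ.injective h)
  calc ∑ i : Fin n, lam x σ i * (∑ e ∈ (Iic i).image σ, v e)
      = ∑ i : Fin n, ∑ k ∈ Iic i, lam x σ i * v (σ k) := by
        refine Finset.sum_congr rfl fun i _ => ?_
        rw [h1 i, Finset.mul_sum]
    _ = ∑ i : Fin n, ∑ k : Fin n, if k ≤ i then lam x σ i * v (σ k) else 0 := by
        refine Finset.sum_congr rfl fun i _ => ?_
        have : Iic i = Finset.univ.filter (fun k => k ≤ i) := by ext k; simp
        rw [this, Finset.sum_filter]
    _ = ∑ k : Fin n, ∑ i : Fin n, if k ≤ i then lam x σ i * v (σ k) else 0 := Finset.sum_comm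
    _ = ∑ k : Fin n, ∑ i ∈ Ici k, lam x σ i * v (σ k) := by
        refine Finset.sum_congr rfl fun k _ => ?_
        have : Ici k = Finset.univ.filter (fun i => k ≤ i) := by ext i; simp
        rw [this, Finset.sum_filter]
    _ = ∑ k : Fin n, v (σ k) * x (σ k) := by
        refine Finset.sum_congr rfl fun k _ => ?_
        rw [← Finset.sum_mul, sum_lam_Ici]
        ring
    _ = ∑ e : Fin n, v e * x e := Equiv.sum_comp σ (fun e => v e * x e)

lemma Lform_eq (f : Finset (Fin n) → ℝ) (hf : f ∅ = 0) (x : Fin n → ℝ) (σ : Equiv.Perm (Fin n)) :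
    ∑ i : Fin n, lam x σ i * f ((Iic i).image σ) = ∑ e : Fin n, wt f σ e * x e := by
  rw [← abel (wt f σ) x σ]
  exact Finset.sum_congr rfl fun i _ => by rw [sum_wt_Iic f hf σ i]

lemma lam_nonneg (x : Fin n → ℝ) (σ : Equiv.Perm (Fin n))
    (hx : ∀ i, 0 ≤ x i) (hσ : ∀ i j : Fin n, i ≤ j → x (σ j) ≤ x (σ i)) (i : Fin n) :
    0 ≤ lam x σ i := by
  unfold lam
  split
  · rename_i h
    have : i ≤ (⟨(i : ℕ) + 1, h⟩ : Fin n) := by simp [Fin.le_def]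
    linarith [hσ i ⟨(i : ℕ) + 1, h⟩ this]
  · simpa using hx (σ i)

lemma bound (f : Finset (Fin n) → ℝ) (hf : f ∅ = 0)
    (hsub : ∀ A B : Finset (Fin n), f (A ∪ B) + f (A ∩ B) ≤ f A + f B)
    (x : Fin n → ℝ) (σ τ : Equiv.Perm (Fin n))
    (hx : ∀ i, 0 ≤ x i) (hσ : ∀ i j : Fin n, i ≤ j → x (σ j) ≤ x (σ i)) :
    ∑ e : Fin n, wt f τ e * x e ≤ ∑ i : Fin n, lam x σ i * f ((Iic i).image σ) := by
  rw [← abel (wt f τ) x σ]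
  refine Finset.sum_le_sum fun i _ => ?_
  exact mul_le_mul_of_nonneg_left (greedy f hf hsub τ _) (lam_nonneg x σ hx hσ i)

lemma exists_sort (x : Fin n → ℝ) :
    ∃ σ : Equiv.Perm (Fin n), ∀ i j : Fin n, i ≤ j → x (σ j) ≤ x (σ i) := by
  refine ⟨Tuple.sort (fun j => -x j), fun i j hij => ?_⟩
  have := Tuple.monotone_sort (fun j => -x j) hij
  simp only [Function.comp_apply] at this
  linarith

end Stmt17Aux

/-- For a submodular `f` with `f(∅)=0`, the Lovász extension `g` is convex on the
hypercube `[0,1]^n`. -/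
theorem stmt_17 {n : ℕ} (f : Finset (Fin n) → ℝ) (hf : f ∅ = 0)
    (hsub : ∀ A B : Finset (Fin n), f (A ∪ B) + f (A ∩ B) ≤ f A + f B)
    (g : (Fin n → ℝ) → ℝ)
    (hg : ∀ (x : Fin n → ℝ) (σ : Equiv.Perm (Fin n)),
      (∀ i j : Fin n, i ≤ j → x (σ j) ≤ x (σ i)) →
      g x = ∑ i : Fin n,
        (x (σ i) - if h : (i : ℕ) + 1 < n then x (σ ⟨(i : ℕ) + 1, h⟩) else 0) *
          f ((Finset.Iic i).image σ)) :
    ConvexOn ℝ {x : Fin n → ℝ | ∀ i, 0 ≤ x i ∧ x i ≤ 1} g := by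
  open Stmt17Aux in
  constructor
  · intro x hx y hy a b ha hb hab i
    have h1 := hx i
    have h2 := hy i
    simp only [Pi.add_apply, Pi.smul_apply, smul_eq_mul]
    constructor
    · nlinarith [h1.1, h2.1]
    · nlinarith [h1.2, h2.2]
  · intro x hx y hy a b ha hb hab
    obtain ⟨σx, hσx⟩ := Stmt17Aux.exists_sort x
    obtain ⟨σy, hσy⟩ := Stmt17Aux.exists_sort y
    set z : Fin n → ℝ := a • x + b • y with hz
    obtain ⟨σz, hσz⟩ := Stmt17Aux.exists_sort z
    have hx0 : ∀ i, 0 ≤ x i := fun i => (hx i).1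
    have hy0 : ∀ i, 0 ≤ y i := fun i => (hy i).1
    have hz0 : ∀ i, 0 ≤ z i := fun i => by
      simp only [hz, Pi.add_apply, Pi.smul_apply, smul_eq_mul]
      exact add_nonneg (mul_nonneg ha (hx0 i)) (mul_nonneg hb (hy0 i))
    rw [hg z σz hσz, hg x σx hσx, hg y σy hσy]
    show ∑ i : Fin n, Stmt17Aux.lam z σz i * f ((Finset.Iic i).image σz)
        ≤ a * ∑ i : Fin n, Stmt17Aux.lam x σx i * f ((Finset.Iic i).image σx)
          + b * ∑ i : Fin n, Stmt17Aux.lam y σy i * f ((Finset.Iic i).image σy)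
    calc ∑ i : Fin n, Stmt17Aux.lam z σz i * f ((Finset.Iic i).image σz)
        = ∑ e : Fin n, Stmt17Aux.wt f σz e * z e := Stmt17Aux.Lform_eq f hf z σz
      _ = a * ∑ e : Fin n, Stmt17Aux.wt f σz e * x e
          + b * ∑ e : Fin n, Stmt17Aux.wt f σz e * y e := by
          simp only [hz, Pi.add_apply, Pi.smul_apply, smul_eq_mul, Finset.mul_sum,
            ← Finset.sum_add_distrib]
          refine Finset.sum_congr rfl fun e _ => ?_
          ring
      _ ≤ a * ∑ i : Fin n, Stmt17Aux.lam x σx i * f ((Finset.Iic i).image σx)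
          + b * ∑ i : Fin n, Stmt17Aux.lam y σy i * f ((Finset.Iic i).image σy) := by
          refine add_le_add ?_ ?_
          · exact mul_le_mul_of_nonneg_left
              (Stmt17Aux.bound f hf hsub x σx σz hx0 hσx) ha
          · exact mul_le_mul_of_nonneg_left
              (Stmt17Aux.bound f hf hsub y σy σz hy0 hσy) hb
end

section
/- Let f : 2^V → ℝ be submodular with f(∅) = 0 and let B_f = {x ∈ ℝ^V : Σ_{i∈A} x(i) ≤ f(A) for all A ⊆ V, and Σ_{i∈V} x(i) = f(V)} be its base polytope. If x* minimizes ‖x‖₂ over B_f, then the set A* = {i ∈ V : x*(i) < 0} satisfies f(A*) = min_{A ⊆ V} f(A). -/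
/-- Fujishige's minimum-norm-point theorem: if `x*` minimizes the Euclidean norm
over the base polytope `B_f` of a submodular function `f` with `f(∅)=0`, then
`A* = {i : x*(i) < 0}` is a minimizer of `f`. -/
theorem stmt_18 {V : Type*} [Fintype V] [DecidableEq V] (f : Finset V → ℝ)
    (hf0 : f ∅ = 0)
    (hsub : ∀ A B : Finset V, f (A ∪ B) + f (A ∩ B) ≤ f A + f B)
    (x : V → ℝ)
    (hxB : (∀ A : Finset V, ∑ i ∈ A, x i ≤ f A) ∧ ∑ i, x i = f Finset.univ)
    (hmin : ∀ y : V → ℝ,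
      ((∀ A : Finset V, ∑ i ∈ A, y i ≤ f A) ∧ ∑ i, y i = f Finset.univ) →
      Real.sqrt (∑ i, (x i) ^ 2) ≤ Real.sqrt (∑ i, (y i) ^ 2)) :
    ∀ A : Finset V, f (Finset.univ.filter (fun i => x i < 0)) ≤ f A := by
  classical
  obtain ⟨hle, hsum⟩ := hxB
  -- the lattice of tight sets
  have htu : ∀ S T : Finset V, (∑ i ∈ S, x i = f S) → (∑ i ∈ T, x i = f T) →
      (∑ i ∈ S ∪ T, x i = f (S ∪ T)) ∧ (∑ i ∈ S ∩ T, x i = f (S ∩ T)) := by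
    intro S T hS hT
    have h1 : ∑ i ∈ S ∪ T, x i + ∑ i ∈ S ∩ T, x i = ∑ i ∈ S, x i + ∑ i ∈ T, x i :=
      Finset.sum_union_inter
    have h2 := hle (S ∪ T)
    have h3 := hle (S ∩ T)
    have h4 := hsub S T
    constructor <;> linarith
  -- for each i there is a minimal tight set containing i
  have hdep : ∀ i : V, ∃ D : Finset V, i ∈ D ∧ (∑ k ∈ D, x k = f D) ∧
      ∀ S : Finset V, (∑ k ∈ S, x k = f S) → i ∈ S → D ⊆ S := by
    intro i
    set F : Finset (Finset V) :=
      Finset.univ.filter (fun S => i ∈ S ∧ ∑ k ∈ S, x k = f S) with hF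
    have hne : F.Nonempty := ⟨Finset.univ, by simp [hF, hsum]⟩
    obtain ⟨D, hDF, hDmin⟩ := Finset.exists_min_image F (fun S => S.card) hne
    simp only [hF, Finset.mem_filter, Finset.mem_univ, true_and] at hDF
    refine ⟨D, hDF.1, hDF.2, ?_⟩
    intro S hS hiS
    have hint : ∑ k ∈ D ∩ S, x k = f (D ∩ S) := (htu D S hDF.2 hS).2
    have hmem : (D ∩ S) ∈ F := by
      simp [hF, Finset.mem_inter, hDF.1, hiS, hint]
    have hcard : D.card ≤ (D ∩ S).card := hDmin _ hmem
    have hsub' : D ∩ S ⊆ D := Finset.inter_subset_left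
    have hDS : D ∩ S = D := Finset.eq_of_subset_of_card_le hsub' hcard
    intro a ha
    rw [← hDS] at ha
    exact (Finset.mem_inter.mp ha).2
  choose D hDi hDt hDmin using hdep
  -- key optimality fact: everything in D i has value ≤ x i
  have hkey : ∀ i j : V, j ∈ D i → x j ≤ x i := by
    intro i j hj
    by_contra hlt
    push_neg at hlt
    have hne : j ≠ i := by rintro rfl; exact lt_irrefl _ hlt
    -- sets containing i but not j have positive slack
    set F2 : Finset (Finset V) :=
      Finset.univ.filter (fun A => i ∈ A ∧ j ∉ A) with hF2
    have hne2 : F2.Nonempty := by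
      refine ⟨{i}, ?_⟩
      simp [hF2, hne]
    set ε0 : ℝ := F2.inf' hne2 (fun A => f A - ∑ k ∈ A, x k) with hε0
    have hε0pos : 0 < ε0 := by
      rw [hε0, Finset.lt_inf'_iff]
      intro A hA
      simp only [hF2, Finset.mem_filter, Finset.mem_univ, true_and] at hA
      have h1 : ∑ k ∈ A, x k ≤ f A := hle A
      have h2 : ∑ k ∈ A, x k ≠ f A := by
        intro htight
        exact hA.2 (hDmin i A htight hA.1 hj)
      have := lt_of_le_of_ne h1 h2
      linarith
    set ε : ℝ := min ε0 ((x j - x i) / 2) with hε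
    have hεpos : 0 < ε := lt_min hε0pos (by linarith)
    set y : V → ℝ := fun k =>
      x k + ε * ((if k = i then (1:ℝ) else 0) - (if k = j then (1:ℝ) else 0)) with hy
    have hsumy : ∀ A : Finset V, ∑ k ∈ A, y k =
        ∑ k ∈ A, x k + ε * ((if i ∈ A then (1:ℝ) else 0) - (if j ∈ A then (1:ℝ) else 0)) := by
      intro A
      simp only [hy]
      rw [Finset.sum_add_distrib, ← Finset.mul_sum, Finset.sum_sub_distrib,
        Finset.sum_ite_eq' A i (fun _ => (1:ℝ)), Finset.sum_ite_eq' A j (fun _ => (1:ℝ))]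
    have hfeas : ∀ A : Finset V, ∑ k ∈ A, y k ≤ f A := by
      intro A
      rw [hsumy A]
      by_cases hiA : i ∈ A <;> by_cases hjA : j ∈ A
      · rw [if_pos hiA, if_pos hjA]
        have := hle A
        nlinarith
      · rw [if_pos hiA, if_neg hjA]
        have h1 : ε ≤ f A - ∑ k ∈ A, x k := by
          have h2 : ε0 ≤ f A - ∑ k ∈ A, x k := by
            apply Finset.inf'_le
            simp [hF2, hiA, hjA]
          calc ε ≤ ε0 := min_le_left _ _
            _ ≤ _ := h2
        nlinarith
      · rw [if_neg hiA, if_pos hjA]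
        have := hle A
        nlinarith
      · rw [if_neg hiA, if_neg hjA]
        have := hle A
        nlinarith
    have htot : ∑ k, y k = f Finset.univ := by
      rw [hsumy Finset.univ]
      simp [hsum]
    have hsq : ∑ k, (y k) ^ 2 = ∑ k, (x k) ^ 2 + 2 * ε * (x i - x j + ε) := by
      have hptw : ∀ k, (y k) ^ 2 = (x k) ^ 2 +
          ((if k = i then 2 * ε * x k + ε ^ 2 else 0) +
           (if k = j then -(2 * ε * x k) + ε ^ 2 else 0)) := by
        intro k
        by_cases hki : k = i
        · have hkj : ¬ k = j := by rw [hki]; exact fun h => hne h.symm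
          simp only [hy, if_pos hki, if_neg hkj]
          ring
        · by_cases hkj : k = j
          · simp only [hy, if_neg hki, if_pos hkj]
            ring
          · simp only [hy, if_neg hki, if_neg hkj]
            ring
      calc ∑ k, (y k) ^ 2
          = ∑ k, ((x k) ^ 2 + ((if k = i then 2 * ε * x k + ε ^ 2 else 0) +
              (if k = j then -(2 * ε * x k) + ε ^ 2 else 0))) := by
            exact Finset.sum_congr rfl (fun k _ => hptw k)
        _ = ∑ k, (x k) ^ 2 + 2 * ε * (x i - x j + ε) := by
            rw [Finset.sum_add_distrib, Finset.sum_add_distrib,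
              Finset.sum_ite_eq' Finset.univ i (fun k => 2 * ε * x k + ε ^ 2),
              Finset.sum_ite_eq' Finset.univ j (fun k => -(2 * ε * x k) + ε ^ 2)]
            simp only [Finset.mem_univ, if_pos]
            ring
    have hless : ∑ k, (y k) ^ 2 < ∑ k, (x k) ^ 2 := by
      rw [hsq]
      have h1 : ε ≤ (x j - x i) / 2 := min_le_right _ _
      nlinarith
    have hc := hmin y ⟨hfeas, htot⟩
    have hynn : (0:ℝ) ≤ ∑ k, (y k) ^ 2 :=
      Finset.sum_nonneg (fun k _ => sq_nonneg _)
    have := Real.sqrt_lt_sqrt hynn hless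
    linarith
  -- the negative set
  set Aneg : Finset V := Finset.univ.filter (fun i => x i < 0) with hAn
  have hDsub : ∀ i ∈ Aneg, D i ⊆ Aneg := by
    intro i hi j hj
    simp only [hAn, Finset.mem_filter, Finset.mem_univ, true_and] at hi ⊢
    exact lt_of_le_of_lt (hkey i j hj) hi
  have hbeq : Aneg = Aneg.biUnion D := by
    apply Finset.Subset.antisymm
    · intro i hi
      exact Finset.mem_biUnion.mpr ⟨i, hi, hDi i⟩
    · intro j hj
      obtain ⟨i, hi, hji⟩ := Finset.mem_biUnion.mp hj
      exact hDsub i hi hji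
  -- a finite union of tight sets is tight
  have hbu : ∀ S : Finset V, ∑ k ∈ S.biUnion D, x k = f (S.biUnion D) := by
    intro S
    induction S using Finset.induction_on with
    | empty => simpa using hf0.symm
    | insert a s hnotmem ih =>
        rw [Finset.biUnion_insert]
        exact (htu _ _ (hDt _) ih).1
  have hAtight : ∑ k ∈ Aneg, x k = f Aneg := by
    rw [hbeq]; exact hbu Aneg
  -- conclusion by weak duality
  intro A
  have h1 : ∑ k ∈ Aneg ∩ A, x k + ∑ k ∈ Aneg \ A, x k = ∑ k ∈ Aneg, x k :=
    Finset.sum_inter_add_sum_sdiff _ _ _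
  have h2 : ∑ k ∈ A ∩ Aneg, x k + ∑ k ∈ A \ Aneg, x k = ∑ k ∈ A, x k :=
    Finset.sum_inter_add_sum_sdiff _ _ _
  have h3 : ∑ k ∈ Aneg \ A, x k ≤ 0 := by
    apply Finset.sum_nonpos
    intro k hk
    have := (Finset.mem_sdiff.mp hk).1
    simp only [hAn, Finset.mem_filter] at this
    linarith [this.2]
  have h4 : 0 ≤ ∑ k ∈ A \ Aneg, x k := by
    apply Finset.sum_nonneg
    intro k hk
    have := (Finset.mem_sdiff.mp hk).2
    simp only [hAn, Finset.mem_filter, Finset.mem_univ, true_and, not_lt] at this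
    exact this
  have h5 : Aneg ∩ A = A ∩ Aneg := Finset.inter_comm _ _
  have h6 := hle A
  rw [h5] at h1
  linarith
end
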